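/- arXiv:1908.01089 — 9 statements merged into one kernel-verified Lean document; each statement's English description precedes it below -/
import Mathlib

section
/- If a sequence of iterates (x_k) in R^d satisfies: (a) linear convergence to a set X̂: dist(x_k, X̂) ≤ A(1-c)^k dist(x_0, X̂) for all k, with A ≥ 1 and c ∈ (0,1); and (b) descent towards all points of X̂: ‖x_{k+1} - y‖ ≤ ‖x_k - y‖ for every y ∈ X̂ and every k; then the total path length satisfies Σ_{k=0}^∞ ‖x_k - x_{k+1}‖ ≤ (2A/c) · dist(x_0, X̂). -/
open Metric ENNReal

theorem path_length_linear_convergence_descent {d : ℕ}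
    (x : ℕ → EuclideanSpace ℝ (Fin d))
    (S : Set (EuclideanSpace ℝ (Fin d))) (hS : S.Nonempty) (hScl : IsClosed S)
    (A c : ℝ) (hA : 1 ≤ A) (hc0 : 0 < c) (hc1 : c < 1)
    (hlin : ∀ k : ℕ, infDist (x k) S ≤ A * (1 - c) ^ k * infDist (x 0) S)
    (hdescent : ∀ (k : ℕ), ∀ y ∈ S, ‖x (k + 1) - y‖ ≤ ‖x k - y‖) :
    ∑' k : ℕ, (‖x k - x (k + 1)‖₊ : ℝ≥0∞) ≤
      ENNReal.ofReal (2 * A / c * infDist (x 0) S) := by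
  set D := infDist (x 0) S with hD
  have hD0 : 0 ≤ D := infDist_nonneg
  have hr0 : (0:ℝ) ≤ 1 - c := by linarith
  have hr1 : (1:ℝ) - c < 1 := by linarith
  -- per-term bound
  have key : ∀ k : ℕ, ‖x k - x (k + 1)‖ ≤ 2 * (A * (1 - c) ^ k * D) := by
    intro k
    obtain ⟨y, hyS, hy⟩ := hScl.exists_infDist_eq_dist hS (x k)
    have h1 : ‖x k - y‖ = infDist (x k) S := by
      rw [hy, dist_eq_norm]
    have h2 : ‖x (k + 1) - y‖ ≤ ‖x k - y‖ := hdescent k y hyS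
    have h3 : ‖x k - x (k + 1)‖ ≤ ‖x k - y‖ + ‖x (k + 1) - y‖ := by
      have : x k - x (k + 1) = (x k - y) - (x (k + 1) - y) := by abel
      rw [this]
      exact norm_sub_le _ _
    have h4 := hlin k
    linarith
  have hsum : Summable (fun k : ℕ => 2 * (A * (1 - c) ^ k * D)) := by
    have : Summable (fun k : ℕ => (1 - c) ^ k) :=
      summable_geometric_of_lt_one hr0 hr1
    simpa [mul_comm, mul_assoc, mul_left_comm] using
      (this.mul_left (2 * A * D))
  have hterm : ∀ k : ℕ, (‖x k - x (k + 1)‖₊ : ℝ≥0∞) ≤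
      ENNReal.ofReal (2 * (A * (1 - c) ^ k * D)) := by
    intro k
    rw [show ((‖x k - x (k + 1)‖₊ : ℝ≥0∞)) = ENNReal.ofReal ‖x k - x (k + 1)‖ from (ofReal_norm _).symm]
    exact ENNReal.ofReal_le_ofReal (key k)
  calc ∑' k : ℕ, (‖x k - x (k + 1)‖₊ : ℝ≥0∞)
      ≤ ∑' k : ℕ, ENNReal.ofReal (2 * (A * (1 - c) ^ k * D)) :=
        ENNReal.tsum_le_tsum hterm
    _ = ENNReal.ofReal (∑' k : ℕ, 2 * (A * (1 - c) ^ k * D)) := by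
        rw [ENNReal.ofReal_tsum_of_nonneg (fun k => by positivity) hsum]
    _ ≤ ENNReal.ofReal (2 * A / c * D) := by
        apply ENNReal.ofReal_le_ofReal
        have hgeo : ∑' k : ℕ, (1 - c) ^ k = (1 - (1 - c))⁻¹ :=
          tsum_geometric_of_lt_one hr0 hr1
        have : ∑' k : ℕ, 2 * (A * (1 - c) ^ k * D) =
            2 * A * D * ∑' k : ℕ, (1 - c) ^ k := by
          rw [← tsum_mul_left]
          congr 1; ext k; ring
        rw [this, hgeo]
        have : (1 : ℝ) - (1 - c) = c := by ring
        rw [this]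
        apply le_of_eq
        field_simp
end

section
/- Let f : R^d → R be continuously differentiable with L-Lipschitz gradient, satisfying the μ-PKL inequality ‖∇f(x)‖² ≥ 2μ(f(x) - f*) for all x, where f* = inf f is attained. Then for gradient descent x_{k+1} = x_k - η∇f(x_k) with step size η ≤ 1/L, the path length satisfies Σ_{k=0}^∞ ‖x_k - x_{k+1}‖ ≤ √(8/μ) · √(f(x_0) - f*). -/
open Real InnerProductSpace

lemma descent_lemma {E : Type*} [NormedAddCommGroup E] [InnerProductSpace ℝ E] [CompleteSpace E]
    (f : E → ℝ) (f' : E → E) (L : ℝ) (hL0 : 0 ≤ L)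
    (hgrad : ∀ x, HasGradientAt f (f' x) x)
    (hlip : ∀ x y, ‖f' x - f' y‖ ≤ L * ‖x - y‖) (x v : E) :
    f (x + v) ≤ f x + ⟪f' x, v⟫_ℝ + L / 2 * ‖v‖ ^ 2 := by
  have hcf' : Continuous f' :=
    (LipschitzWith.of_dist_le_mul (K := L.toNNReal) fun a b => by
      simpa [dist_eq_norm, Real.coe_toNNReal L hL0] using hlip a b).continuous
  have hφ : ∀ t : ℝ, HasDerivAt (fun t : ℝ => f (x + t • v)) ⟪f' (x + t • v), v⟫_ℝ t := by
    intro t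
    have h1 : HasDerivAt (fun t : ℝ => x + t • v) v t := by
      simpa using ((hasDerivAt_id t).smul_const v).const_add x
    have := ((hgrad (x + t • v)).hasFDerivAt.comp_hasDerivAt t h1)
    have h := this
    simp at h
    exact h
  have hcont : Continuous fun t : ℝ => ⟪f' (x + t • v), v⟫_ℝ := by
    exact (hcf'.comp (by continuity)).inner continuous_const
  have hint : f (x + v) - f x = ∫ t in (0:ℝ)..1, ⟪f' (x + t • v), v⟫_ℝ := by
    have := intervalIntegral.integral_eq_sub_of_hasDerivAt
      (f := fun t : ℝ => f (x + t • v)) (a := 0) (b := 1)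
      (fun t _ => hφ t) (hcont.intervalIntegrable 0 1)
    simpa using this.symm
  have hbound : (∫ t in (0:ℝ)..1, ⟪f' (x + t • v), v⟫_ℝ) ≤
      ∫ t in (0:ℝ)..1, (⟪f' x, v⟫_ℝ + (L * ‖v‖ ^ 2) * t) := by
    apply intervalIntegral.integral_mono_on (by norm_num)
      (hcont.intervalIntegrable 0 1) (by apply Continuous.intervalIntegrable; continuity)
    intro t ht
    rw [Set.mem_Icc] at ht
    have h1 : ⟪f' (x + t • v), v⟫_ℝ - ⟪f' x, v⟫_ℝ = ⟪f' (x + t • v) - f' x, v⟫_ℝ := by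
      rw [inner_sub_left]
    have h2 : ⟪f' (x + t • v) - f' x, v⟫_ℝ ≤ ‖f' (x + t • v) - f' x‖ * ‖v‖ :=
      real_inner_le_norm _ _
    have h3 : ‖f' (x + t • v) - f' x‖ ≤ L * (t * ‖v‖) := by
      have := hlip (x + t • v) x
      simpa [norm_smul, abs_of_nonneg ht.1] using this
    nlinarith [norm_nonneg v, mul_le_mul_of_nonneg_right h3 (norm_nonneg v)]
  have hval : (∫ t in (0:ℝ)..1, (⟪f' x, v⟫_ℝ + (L * ‖v‖ ^ 2) * t)) =
      ⟪f' x, v⟫_ℝ + L / 2 * ‖v‖ ^ 2 := by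
    rw [intervalIntegral.integral_add (by apply Continuous.intervalIntegrable; continuity)
      (by apply Continuous.intervalIntegrable; continuity)]
    rw [intervalIntegral.integral_const_mul]
    simp [integral_id]
    ring
  linarith [hint, hbound.trans_eq hval]

set_option maxHeartbeats 1000000 in
lemma step_bound (μ η s a b : ℝ) (hμ : 0 < μ) (hη : 0 < η) (hs : 0 ≤ s)
    (ha : 0 ≤ a) (hb : 0 ≤ b)
    (hdec : b ≤ a - η / 2 * s ^ 2) (hpkl : 2 * μ * a ≤ s ^ 2) :
    η * s ≤ Real.sqrt (8 / μ) * (Real.sqrt a - Real.sqrt b) := by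
  set sa := Real.sqrt a with hsa
  set sb := Real.sqrt b with hsb
  set c := Real.sqrt (8 / μ) with hc
  have hsa0 : 0 ≤ sa := Real.sqrt_nonneg a
  have hsb0 : 0 ≤ sb := Real.sqrt_nonneg b
  have hc0 : 0 ≤ c := Real.sqrt_nonneg _
  have hsa2 : sa ^ 2 = a := Real.sq_sqrt ha
  have hsb2 : sb ^ 2 = b := Real.sq_sqrt hb
  have hc2 : c ^ 2 = 8 / μ := Real.sq_sqrt (by positivity)
  have hc2' : μ * c ^ 2 = 8 := by rw [hc2]; field_simp
  have h2 : sb ≤ sa := Real.sqrt_le_sqrt (by nlinarith)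
  clear_value sa sb c
  clear hsa hsb hc
  rcases eq_or_lt_of_le (by positivity : (0:ℝ) ≤ sa + sb) with h0 | hpos
  · have hsa' : sa = 0 := by nlinarith
    have hsb' : sb = 0 := by nlinarith
    have hss : s ^ 2 ≤ 0 := by nlinarith
    have hs0 : s = 0 := by nlinarith [sq_nonneg s]
    simp [hsa', hsb', hs0]
  · -- 4 * sa ≤ c * s
    have h1 : 4 * sa ≤ c * s := by
      by_contra h
      push_neg at h
      have hcs : 0 ≤ c * s := mul_nonneg hc0 hs
      nlinarith [mul_self_nonneg (c*s - 4*sa)]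
    have e1 : η * s * (sa + sb) ≤ 2 * (η * s) * sa := by
      nlinarith [mul_le_mul_of_nonneg_left h2 (mul_nonneg hη.le hs)]
    have e2 : 2 * (η * s) * sa ≤ η * s / 2 * (c * s) := by
      nlinarith [mul_le_mul_of_nonneg_left h1 (mul_nonneg hη.le hs)]
    have e4 : η / 2 * s ^ 2 ≤ sa ^ 2 - sb ^ 2 := by rw [hsa2, hsb2]; linarith
    have e3 : η * s / 2 * (c * s) ≤ c * (sa - sb) * (sa + sb) := by
      nlinarith [mul_le_mul_of_nonneg_left e4 hc0]
    have key : η * s * (sa + sb) ≤ c * (sa - sb) * (sa + sb) := by linarith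
    exact le_of_mul_le_mul_right key hpos

open Metric ENNReal

theorem pkl_gd_path_length {d : ℕ}
    (f : EuclideanSpace ℝ (Fin d) → ℝ)
    (f' : EuclideanSpace ℝ (Fin d) → EuclideanSpace ℝ (Fin d))
    (L μ η fstar : ℝ) (hL : 0 < L) (hμ : 0 < μ)
    (hgrad : ∀ x, HasGradientAt f (f' x) x)
    (hlip : ∀ x y, ‖f' x - f' y‖ ≤ L * ‖x - y‖)
    (hattained : ∃ xm, f xm = fstar) (hlb : ∀ x, fstar ≤ f x)
    (hpkl : ∀ x, 2 * μ * (f x - fstar) ≤ ‖f' x‖ ^ 2)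
    (hη0 : 0 < η) (hη : η ≤ 1 / L)
    (x : ℕ → EuclideanSpace ℝ (Fin d))
    (hx : ∀ k : ℕ, x (k + 1) = x k - η • f' (x k)) :
    ∑' k : ℕ, (‖x k - x (k + 1)‖₊ : ℝ≥0∞) ≤
      ENNReal.ofReal (Real.sqrt (8 / μ) * Real.sqrt (f (x 0) - fstar)) := by
  set Δ : ℕ → ℝ := fun k => f (x k) - fstar with hΔ
  have hΔ0 : ∀ k, 0 ≤ Δ k := fun k => sub_nonneg.mpr (hlb (x k))
  -- descent inequality
  have hdesc : ∀ k, Δ (k + 1) ≤ Δ k - η / 2 * ‖f' (x k)‖ ^ 2 := by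
    intro k
    have hv : x (k + 1) = x k + (-(η • f' (x k))) := by rw [hx k]; abel
    have := descent_lemma f f' L hL.le hgrad hlip (x k) (-(η • f' (x k)))
    rw [← hv] at this
    have hinner : ⟪f' (x k), -(η • f' (x k))⟫_ℝ = -(η * ‖f' (x k)‖ ^ 2) := by
      rw [inner_neg_right, real_inner_smul_right, real_inner_self_eq_norm_sq]
    have hnrm : ‖-(η • f' (x k))‖ ^ 2 = η ^ 2 * ‖f' (x k)‖ ^ 2 := by
      rw [norm_neg, norm_smul]
      simp [abs_of_nonneg hη0.le, mul_pow]
    rw [hinner, hnrm] at this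
    have hLη : L * η ≤ 1 := by
      rw [le_div_iff₀ hL] at hη; linarith
    have hg2 : 0 ≤ ‖f' (x k)‖ ^ 2 := sq_nonneg _
    simp only [hΔ]
    nlinarith [mul_le_mul_of_nonneg_right (mul_le_mul_of_nonneg_right hLη hη0.le) hg2]
  -- per-step bound
  have hstep : ∀ k, ‖x k - x (k + 1)‖ ≤
      Real.sqrt (8 / μ) * (Real.sqrt (Δ k) - Real.sqrt (Δ (k + 1))) := by
    intro k
    have hxx : x k - x (k + 1) = η • f' (x k) := by rw [hx k]; abel
    have hn : ‖x k - x (k + 1)‖ = η * ‖f' (x k)‖ := by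
      rw [hxx, norm_smul, Real.norm_of_nonneg hη0.le]
    rw [hn]
    exact step_bound μ η (‖f' (x k)‖) (Δ k) (Δ (k + 1)) hμ hη0 (norm_nonneg _)
      (hΔ0 k) (hΔ0 (k + 1)) (hdesc k) (hpkl (x k))
  -- partial sums
  have hsum : ∀ n : ℕ, ∑ k ∈ Finset.range n, ‖x k - x (k + 1)‖ ≤
      Real.sqrt (8 / μ) * Real.sqrt (Δ 0) := by
    intro n
    calc ∑ k ∈ Finset.range n, ‖x k - x (k + 1)‖
        ≤ ∑ k ∈ Finset.range n,
            (Real.sqrt (8 / μ) * Real.sqrt (Δ k) - Real.sqrt (8 / μ) * Real.sqrt (Δ (k + 1))) := by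
          apply Finset.sum_le_sum
          intro k _
          have := hstep k
          linarith [this, mul_sub (Real.sqrt (8 / μ)) (Real.sqrt (Δ k)) (Real.sqrt (Δ (k+1)))]
      _ = Real.sqrt (8 / μ) * Real.sqrt (Δ 0) - Real.sqrt (8 / μ) * Real.sqrt (Δ n) :=
          Finset.sum_range_sub' (fun k => Real.sqrt (8 / μ) * Real.sqrt (Δ k)) n
      _ ≤ Real.sqrt (8 / μ) * Real.sqrt (Δ 0) := by
          have : 0 ≤ Real.sqrt (8 / μ) * Real.sqrt (Δ n) := by positivity
          linarith
  -- conclude via ENNReal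
  apply ENNReal.tsum_le_of_sum_range_le
  intro n
  have : ∑ k ∈ Finset.range n, (‖x k - x (k + 1)‖₊ : ℝ≥0∞) =
      ENNReal.ofReal (∑ k ∈ Finset.range n, ‖x k - x (k + 1)‖) := by
    rw [ENNReal.ofReal_sum_of_nonneg (fun k _ => norm_nonneg _)]
    exact Finset.sum_congr rfl fun k _ => (ofReal_norm _).symm
  rw [this]
  exact ENNReal.ofReal_le_ofReal (hsum n)
end

section
/- Let f : R^d → R be continuously differentiable satisfying the μ-PKL inequality ‖∇f(x)‖² ≥ 2μ(f(x) - f*) for all x, where f* is the attained minimum and X* the set of minimizers. Then f satisfies quadratic growth: f(x) - f* ≥ (μ/2) · dist(x, X*)² for all x (assuming X* is nonempty and closed and the gradient flow from any point converges to X*). -/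
open Metric Filter

theorem pkl_implies_quadratic_growth {d : ℕ}
    (f : EuclideanSpace ℝ (Fin d) → ℝ)
    (f' : EuclideanSpace ℝ (Fin d) → EuclideanSpace ℝ (Fin d))
    (μ fstar : ℝ) (hμ : 0 < μ)
    (hgrad : ∀ x, HasGradientAt f (f' x) x)
    (hlb : ∀ x, fstar ≤ f x)
    (Xstar : Set (EuclideanSpace ℝ (Fin d)))
    (hXstar : Xstar = {z | f z = fstar}) (hXne : Xstar.Nonempty)
    (hXcl : IsClosed Xstar)
    (hpkl : ∀ x, 2 * μ * (f x - fstar) ≤ ‖f' x‖ ^ 2)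
    (hflow : ∀ x0 : EuclideanSpace ℝ (Fin d),
      ∃ γ : ℝ → EuclideanSpace ℝ (Fin d), γ 0 = x0 ∧
        (∀ t : ℝ, 0 ≤ t → HasDerivAt γ (-f' (γ t)) t) ∧
        Tendsto (fun t => infDist (γ t) Xstar) atTop (nhds 0)) :
    ∀ x, μ / 2 * infDist x Xstar ^ 2 ≤ f x - fstar := by
  intro x
  obtain ⟨γ, hγ0, hγ', hγlim⟩ := hflow x
  set h : ℝ → ℝ := fun t => f (γ t) - fstar with hh_def
  set C : ℝ := Real.sqrt (2 / μ) with hC_def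
  have hC0 : 0 ≤ C := Real.sqrt_nonneg _
  have hnn : ∀ t, 0 ≤ h t := fun t => sub_nonneg.2 (hlb _)
  have hderiv : ∀ t, 0 ≤ t → HasDerivAt h (-‖f' (γ t)‖ ^ 2) t := by
    intro t ht
    have h1 := (hgrad (γ t)).hasFDerivAt.comp_hasDerivAt t (hγ' t ht)
    have h2 : HasDerivAt (fun s => f (γ s)) (-‖f' (γ t)‖ ^ 2) t := by
      refine h1.congr_deriv ?_
      rw [InnerProductSpace.toDual_apply_apply, inner_neg_right,
        real_inner_self_eq_norm_sq]
    simpa [hh_def] using h2.sub_const fstar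
  -- key length estimate along the flow
  have key : ∀ T, 0 ≤ T → (∀ t ∈ Set.Ico (0:ℝ) T, 0 < h t) →
      ‖γ T - x‖ ≤ C * Real.sqrt (h 0) := by
    intro T hT hpos
    set B : ℝ → ℝ := fun t => C * (Real.sqrt (h 0) - Real.sqrt (h t)) with hB_def
    set B' : ℝ → ℝ := fun t => C * (‖f' (γ t)‖ ^ 2 / (2 * Real.sqrt (h t)))
      with hB'_def
    have hhcont : ContinuousOn h (Set.Icc 0 T) :=
      fun t ht => ((hderiv t ht.1).continuousAt).continuousWithinAt
    have hγcont : ContinuousOn γ (Set.Icc 0 T) :=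
      fun t ht => ((hγ' t ht.1).continuousAt).continuousWithinAt
    have hBcont : ContinuousOn B (Set.Icc 0 T) := by
      apply continuousOn_const.mul
      exact continuousOn_const.sub (Real.continuous_sqrt.comp_continuousOn hhcont)
    have hB'deriv : ∀ t ∈ Set.Ico (0:ℝ) T, HasDerivWithinAt B (B' t) (Set.Ici t) t := by
      intro t ht
      have hne : h t ≠ 0 := (hpos t ht).ne'
      have hs : HasDerivAt (fun s => Real.sqrt (h s))
          (1 / (2 * Real.sqrt (h t)) * (-‖f' (γ t)‖ ^ 2)) t :=
        (Real.hasDerivAt_sqrt hne).comp t (hderiv t ht.1)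
      have hd : HasDerivAt B
          (C * (0 - 1 / (2 * Real.sqrt (h t)) * (-‖f' (γ t)‖ ^ 2))) t :=
        ((hasDerivAt_const t (Real.sqrt (h 0))).sub hs).const_mul C
      have heq : C * (0 - 1 / (2 * Real.sqrt (h t)) * (-‖f' (γ t)‖ ^ 2)) = B' t := by
        rw [hB'_def]; ring
      exact (heq ▸ hd).hasDerivWithinAt
    have hbound : ∀ t ∈ Set.Ico (0:ℝ) T, ‖-f' (γ t)‖ ≤ B' t := by
      intro t ht
      rw [norm_neg]
      set g := ‖f' (γ t)‖ with hg_def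
      have hg0 : 0 ≤ g := norm_nonneg _
      have hsq : Real.sqrt (2 * μ * h t) ≤ g := by
        rw [← Real.sqrt_sq hg0]
        exact Real.sqrt_le_sqrt (hpkl (γ t))
      have hst : 0 < Real.sqrt (h t) := Real.sqrt_pos.2 (hpos t ht)
      have h2μ : (0:ℝ) ≤ 2 * μ := by positivity
      have e1 : Real.sqrt (2 * μ * h t) = Real.sqrt (2 * μ) * Real.sqrt (h t) :=
        Real.sqrt_mul h2μ _
      have e2 : C * Real.sqrt (2 * μ) = 2 := by
        rw [hC_def, ← Real.sqrt_mul (by positivity)]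
        rw [show 2 / μ * (2 * μ) = 4 by field_simp; ring]
        rw [show (4:ℝ) = 2 ^ 2 by norm_num, Real.sqrt_sq (by norm_num)]
      have hkey : 2 * Real.sqrt (h t) * g ≤ C * g ^ 2 := by
        calc 2 * Real.sqrt (h t) * g
            = C * Real.sqrt (2 * μ) * Real.sqrt (h t) * g := by rw [e2]
          _ = C * (Real.sqrt (2 * μ) * Real.sqrt (h t)) * g := by ring
          _ ≤ C * g * g := by
              apply mul_le_mul_of_nonneg_right _ hg0
              apply mul_le_mul_of_nonneg_left _ hC0
              rw [← e1]; exact hsq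
          _ = C * g ^ 2 := by ring
      show g ≤ C * (g ^ 2 / (2 * Real.sqrt (h t)))
      rw [mul_div_assoc', le_div_iff₀ (by positivity)]
      linarith [hkey]
    have main := image_norm_le_of_norm_deriv_right_le_deriv_boundary'
      (f := fun t => γ t - x) (f' := fun t => -f' (γ t)) (a := 0) (b := T)
      (B := B) (B' := B')
      (hγcont.sub continuousOn_const)
      (fun t ht => ((hγ' t ht.1).sub_const x).hasDerivWithinAt)
      (by simp [hB_def, hγ0])
      hBcont hB'deriv hbound
    have hmain := main (Set.right_mem_Icc.2 hT)
    have hBT : B T ≤ C * Real.sqrt (h 0) := by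
      have hbt : B T = C * (Real.sqrt (h 0) - Real.sqrt (h T)) := rfl
      have : 0 ≤ C * Real.sqrt (h T) := mul_nonneg hC0 (Real.sqrt_nonneg _)
      nlinarith
    exact hmain.trans hBT
  -- in both cases we establish the distance bound
  have hfin : infDist x Xstar ≤ C * Real.sqrt (h 0) := by
    by_cases hz : ∃ t, 0 ≤ t ∧ h t = 0
    · obtain ⟨T, hT0, hTz⟩ := hz
      set A : Set ℝ := Set.Icc 0 T ∩ h ⁻¹' {0} with hA_def
      have hhcont : ContinuousOn h (Set.Icc 0 T) :=
        fun t ht => ((hderiv t ht.1).continuousAt).continuousWithinAt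
      have hAclosed : IsClosed A :=
        hhcont.preimage_isClosed_of_isClosed isClosed_Icc isClosed_singleton
      have hAne : A.Nonempty := ⟨T, ⟨⟨hT0, le_refl T⟩, hTz⟩⟩
      have hAbdd : BddBelow A := ⟨0, fun s hs => hs.1.1⟩
      have ht0A : sInf A ∈ A := hAclosed.csInf_mem hAne hAbdd
      set t0 := sInf A with ht0_def
      have ht00 : 0 ≤ t0 := ht0A.1.1
      have hpos : ∀ t ∈ Set.Ico (0:ℝ) t0, 0 < h t := by
        intro t ht
        refine lt_of_le_of_ne (hnn t) fun he => ?_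
        have htA : t ∈ A := ⟨⟨ht.1, ht.2.le.trans ht0A.1.2⟩, he.symm⟩
        exact absurd (csInf_le hAbdd htA) (not_le.2 ht.2)
      have hb := key t0 ht00 hpos
      have hmem : γ t0 ∈ Xstar := by
        rw [hXstar]
        have : f (γ t0) - fstar = 0 := ht0A.2
        simpa [Set.mem_setOf_eq] using sub_eq_zero.1 this
      calc infDist x Xstar ≤ dist x (γ t0) := infDist_le_dist_of_mem hmem
        _ = ‖γ t0 - x‖ := by rw [dist_eq_norm, norm_sub_rev]
        _ ≤ C * Real.sqrt (h 0) := hb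
    · have hpos : ∀ t, 0 ≤ t → 0 < h t := fun t ht =>
        lt_of_le_of_ne (hnn t) fun he => hz ⟨t, ht, he.symm⟩
      have hb : ∀ T, 0 ≤ T → ‖γ T - x‖ ≤ C * Real.sqrt (h 0) := fun T hT =>
        key T hT fun t ht => hpos t ht.1
      have hev : ∀ᶠ T in atTop,
          infDist x Xstar ≤ infDist (γ T) Xstar + C * Real.sqrt (h 0) := by
        filter_upwards [eventually_ge_atTop (0:ℝ)] with T hT
        calc infDist x Xstar ≤ infDist (γ T) Xstar + dist x (γ T) :=
              infDist_le_infDist_add_dist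
          _ ≤ infDist (γ T) Xstar + C * Real.sqrt (h 0) := by
              apply add_le_add le_rfl
              rw [dist_eq_norm, norm_sub_rev]
              exact hb T hT
      have hlim2 : Tendsto (fun T => infDist (γ T) Xstar + C * Real.sqrt (h 0))
          atTop (nhds (0 + C * Real.sqrt (h 0))) :=
        hγlim.add tendsto_const_nhds
      simpa using ge_of_tendsto hlim2 hev
  -- conclude quadratic growth
  have h0eq : h 0 = f x - fstar := by rw [hh_def]; simp [hγ0]
  have hd0 : 0 ≤ infDist x Xstar := infDist_nonneg
  have hsq : infDist x Xstar ^ 2 ≤ (C * Real.sqrt (h 0)) ^ 2 :=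
    pow_le_pow_left₀ hd0 hfin 2
  have hC2 : C ^ 2 = 2 / μ := Real.sq_sqrt (by positivity)
  have hs2 : Real.sqrt (h 0) ^ 2 = h 0 := Real.sq_sqrt (hnn 0)
  have hfinal : infDist x Xstar ^ 2 ≤ 2 / μ * h 0 := by
    calc infDist x Xstar ^ 2 ≤ (C * Real.sqrt (h 0)) ^ 2 := hsq
      _ = C ^ 2 * Real.sqrt (h 0) ^ 2 := by ring
      _ = 2 / μ * h 0 := by rw [hC2, hs2]
  rw [← h0eq]
  have hmul := mul_le_mul_of_nonneg_left hfinal (by positivity : (0:ℝ) ≤ μ / 2)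
  have heq : μ / 2 * (2 / μ * h 0) = h 0 := by field_simp
  linarith
end

section
/- Let f : R^d → R be convex and differentiable with L-Lipschitz gradient, and let (x_k) be the gradient descent iterates x_{k+1} = x_k - η∇f(x_k) with 0 < η ≤ 1/L. Then the iterate sequence is self-contracted: for all natural numbers s ≤ t, ‖x_{s+1} - x_t‖ ≤ ‖x_s - x_t‖; equivalently, for s1 ≤ s2 ≤ s3, ‖x_{s3} - x_{s2}‖ ≤ ‖x_{s3} - x_{s1}‖. -/
open Set InnerProductSpace intervalIntegral

section Aux

variable {E : Type*} [NormedAddCommGroup E] [InnerProductSpace ℝ E] [CompleteSpace E]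

local notation "⟪" a ", " b "⟫" => @inner ℝ _ _ a b

lemma line_hasDerivAt' (f : E → ℝ) (g : E → E) (hg : ∀ z, HasGradientAt f (g z) z)
    (x v : E) (t : ℝ) :
    HasDerivAt (fun s : ℝ => f (x + s • v)) ⟪g (x + t • v), v⟫ t := by
  have h1 : HasDerivAt (fun s : ℝ => x + s • v) v t := by
    simpa using ((hasDerivAt_id t).smul_const v).const_add x
  have h2 := (hg (x + t • v)).hasFDerivAt.comp_hasDerivAt t h1
  simp at h2
  exact h2

lemma descent_lemma_s6 (f : E → ℝ) (g : E → E) (L : ℝ)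
    (hg : ∀ z, HasGradientAt f (g z) z)
    (hlip : ∀ a b, ‖g a - g b‖ ≤ L * ‖a - b‖) (x y : E) :
    f y ≤ f x + ⟪g x, y - x⟫ + L / 2 * ‖y - x‖ ^ 2 := by
  set v := y - x with hv
  have hgc : Continuous g := by
    refine (LipschitzWith.of_dist_le_mul (K := Real.toNNReal L) (fun a b => ?_)).continuous
    rw [dist_eq_norm, dist_eq_norm]
    refine (hlip a b).trans (mul_le_mul_of_nonneg_right ?_ (norm_nonneg _))
    exact Real.le_coe_toNNReal L
  have hψc : Continuous (fun t : ℝ => ⟪g (x + t • v), v⟫) := by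
    exact (hgc.comp (by continuity)).inner continuous_const
  have hFTC : f (x + (1:ℝ) • v) - f (x + (0:ℝ) • v)
      = ∫ t in (0:ℝ)..1, ⟪g (x + t • v), v⟫ := by
    refine (integral_eq_sub_of_hasDerivAt (fun t _ => line_hasDerivAt' f g hg x v t) ?_).symm
    exact (hψc.intervalIntegrable 0 1)
  have hmono : ∫ t in (0:ℝ)..1, ⟪g (x + t • v), v⟫
      ≤ ∫ t in (0:ℝ)..1, (⟪g x, v⟫ + (L * ‖v‖ ^ 2) * t) := by
    refine integral_mono_on zero_le_one (hψc.intervalIntegrable 0 1)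
      ((by continuity : Continuous fun t : ℝ => ⟪g x, v⟫ + (L * ‖v‖^2) * t).intervalIntegrable 0 1)
      (fun t ht => ?_)
    have key : ⟪g (x + t • v) - g x, v⟫ ≤ (L * ‖v‖ ^ 2) * t := by
      calc ⟪g (x + t • v) - g x, v⟫ ≤ ‖g (x + t • v) - g x‖ * ‖v‖ :=
            real_inner_le_norm _ _
        _ ≤ (L * ‖x + t • v - x‖) * ‖v‖ := by
            have := hlip (x + t • v) x
            nlinarith [norm_nonneg (g (x + t•v) - g x), norm_nonneg v, this]
        _ = (L * ‖v‖ ^ 2) * t := by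
            rw [add_sub_cancel_left, norm_smul, Real.norm_eq_abs, abs_of_nonneg ht.1]
            ring
    have : ⟪g (x + t • v), v⟫ = ⟪g x, v⟫ + ⟪g (x + t • v) - g x, v⟫ := by
      rw [inner_sub_left]; ring
    linarith
  have hint : ∫ t in (0:ℝ)..1, (⟪g x, v⟫ + (L * ‖v‖ ^ 2) * t)
      = ⟪g x, v⟫ + L / 2 * ‖v‖ ^ 2 := by
    have : ∫ t in (0:ℝ)..1, (⟪g x, v⟫ + (L * ‖v‖ ^ 2) * t)
        = (∫ _t in (0:ℝ)..1, ⟪g x, v⟫) + ∫ t in (0:ℝ)..1, (L * ‖v‖ ^ 2) * t :=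
      integral_add intervalIntegrable_const
        (((continuous_const.mul continuous_id).intervalIntegrable 0 1))
    rw [this, intervalIntegral.integral_const_mul, integral_id, integral_const]
    simp
    ring
  have h0 : x + (0:ℝ) • v = x := by simp
  have h1 : x + (1:ℝ) • v = y := by simp [hv]
  rw [h0, h1] at hFTC
  linarith [hFTC, hmono.trans_eq hint]

lemma conv_grad (f : E → ℝ) (g : E → E) (hconv : ConvexOn ℝ Set.univ f)
    (hg : ∀ z, HasGradientAt f (g z) z) (x y : E) :
    f x + ⟪g x, y - x⟫ ≤ f y := by
  have hφ : ConvexOn ℝ Set.univ (fun t : ℝ => f (x + t • (y - x))) := by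
    have := hconv.comp_affineMap
      (AffineMap.const ℝ ℝ x + (LinearMap.toAffineMap (LinearMap.smulRight (LinearMap.id) (y - x))))
    simp [Function.comp] at this
    exact this
  have hder := line_hasDerivAt' f g hg x (y - x) 0
  simp only [zero_smul, add_zero] at hder
  have := hφ.le_slope_of_hasDerivAt (mem_univ (0:ℝ)) (mem_univ (1:ℝ)) one_pos hder
  rw [slope_def_field] at this
  simp only [one_smul, zero_smul, add_zero] at this
  have h2 : ⟪g x, y - x⟫ ≤ f (x + (y - x)) - f x := by
    simpa [div_one] using this
  have hxy : x + (y - x) = y := by abel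
  rw [hxy] at h2
  linarith

/-- One gradient descent step does not increase the distance to any point with
smaller function value than the next iterate. -/
lemma gd_step (f : E → ℝ) (g : E → E) (L η : ℝ) (hL : 0 < L)
    (hconv : ConvexOn ℝ Set.univ f)
    (hg : ∀ z, HasGradientAt f (g z) z)
    (hlip : ∀ a b, ‖g a - g b‖ ≤ L * ‖a - b‖)
    (hη0 : 0 < η) (hη : η ≤ 1 / L) (a y : E)
    (hfy : f y ≤ f (a - η • g a)) :
    ‖a - η • g a - y‖ ≤ ‖a - y‖ := by
  set G := g a with hG
  have hLη : L * η ≤ 1 := by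
    rw [le_div_iff₀ hL] at hη; nlinarith
  -- descent: f (a - η•G) ≤ f a - η/2 ‖G‖²
  have hdesc : f (a - η • G) ≤ f a - η / 2 * ‖G‖ ^ 2 := by
    have h := descent_lemma_s6 f g L hg hlip a (a - η • G)
    have hv : a - η • G - a = -(η • G) := by abel
    rw [hv] at h
    have hi : ⟪G, -(η • G)⟫ = -η * ‖G‖ ^ 2 := by
      rw [inner_neg_right, real_inner_smul_right, real_inner_self_eq_norm_sq]; ring
    have hn : ‖-(η • G)‖ ^ 2 = η ^ 2 * ‖G‖ ^ 2 := by
      rw [norm_neg, norm_smul, Real.norm_eq_abs, abs_of_pos hη0, mul_pow]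
    rw [hi, hn] at h
    nlinarith [sq_nonneg ‖G‖, sq_nonneg η]
  -- convexity: f a - f y ≤ ⟪G, a - y⟫
  have hcvx : f a - f y ≤ ⟪G, a - y⟫ := by
    have h := conv_grad f g hconv hg a y
    have : ⟪G, y - a⟫ = -⟪G, a - y⟫ := by
      rw [← inner_neg_right]; congr 1; abel
    rw [this] at h; linarith
  -- expand squares
  have hsq : ‖a - η • G - y‖ ^ 2
      = ‖a - y‖ ^ 2 - 2 * η * ⟪G, a - y⟫ + η ^ 2 * ‖G‖ ^ 2 := by
    have h1 : a - η • G - y = (a - y) - η • G := by abel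
    rw [h1, norm_sub_sq_real, real_inner_smul_right, norm_smul, Real.norm_eq_abs,
      abs_of_pos hη0, mul_pow, real_inner_comm]
    ring
  have key : ‖a - η • G - y‖ ^ 2 ≤ ‖a - y‖ ^ 2 := by
    rw [hsq]
    nlinarith [hfy, hdesc, hcvx]
  calc ‖a - η • G - y‖ = Real.sqrt (‖a - η • G - y‖ ^ 2) := by
        rw [Real.sqrt_sq (norm_nonneg _)]
    _ ≤ Real.sqrt (‖a - y‖ ^ 2) := Real.sqrt_le_sqrt key
    _ = ‖a - y‖ := Real.sqrt_sq (norm_nonneg _)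

end Aux

theorem gd_self_contracted {d : ℕ}
    (f : EuclideanSpace ℝ (Fin d) → ℝ)
    (f' : EuclideanSpace ℝ (Fin d) → EuclideanSpace ℝ (Fin d))
    (L η : ℝ) (hL : 0 < L)
    (hconv : ConvexOn ℝ Set.univ f)
    (hgrad : ∀ x, HasGradientAt f (f' x) x)
    (hlip : ∀ x y, ‖f' x - f' y‖ ≤ L * ‖x - y‖)
    (hη0 : 0 < η) (hη : η ≤ 1 / L)
    (x : ℕ → EuclideanSpace ℝ (Fin d))
    (hx : ∀ k : ℕ, x (k + 1) = x k - η • f' (x k)) :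
    ∀ s1 s2 s3 : ℕ, s1 ≤ s2 → s2 ≤ s3 →
      ‖x s3 - x s2‖ ≤ ‖x s3 - x s1‖ := by
  -- function values decrease along iterates
  have hdec : ∀ k, f (x (k + 1)) ≤ f (x k) := by
    intro k
    have hLη : L * η ≤ 1 := by
      rw [le_div_iff₀ hL] at hη; nlinarith
    have h := descent_lemma_s6 f f' L hgrad hlip (x k) (x (k + 1))
    rw [hx k] at h ⊢
    have hv : x k - η • f' (x k) - x k = -(η • f' (x k)) := by abel
    have hi : @inner ℝ _ _ (f' (x k)) (x k - η • f' (x k) - x k) = -η * ‖f' (x k)‖ ^ 2 := by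
      rw [hv, inner_neg_right, real_inner_smul_right, real_inner_self_eq_norm_sq]; ring
    have hn : ‖x k - η • f' (x k) - x k‖ ^ 2 = η ^ 2 * ‖f' (x k)‖ ^ 2 := by
      rw [hv, norm_neg, norm_smul, Real.norm_eq_abs, abs_of_pos hη0, mul_pow]
    rw [hi, hn] at h
    nlinarith [sq_nonneg ‖f' (x k)‖]
  have hmono : ∀ m n : ℕ, m ≤ n → f (x n) ≤ f (x m) := by
    intro m n hmn
    induction n, hmn using Nat.le_induction with
    | base => exact le_refl _
    | succ n hmn ih => exact le_trans (hdec n) ih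
  intro s1 s2 s3 h12 h23
  induction s2, h12 using Nat.le_induction with
  | base => exact le_refl _
  | succ s2 h12 ih =>
    have h2' : s2 ≤ s3 := le_trans (Nat.le_succ s2) h23
    have hstep : ‖x s2 - η • f' (x s2) - x s3‖ ≤ ‖x s2 - x s3‖ :=
      gd_step f f' L η hL hconv hgrad hlip hη0 hη (x s2) (x s3)
        (by rw [← hx s2]; exact hmono (s2 + 1) s3 h23)
    calc ‖x s3 - x (s2 + 1)‖ = ‖x (s2 + 1) - x s3‖ := norm_sub_rev _ _
      _ = ‖x s2 - η • f' (x s2) - x s3‖ := by rw [hx s2]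
      _ ≤ ‖x s2 - x s3‖ := hstep
      _ = ‖x s3 - x s2‖ := norm_sub_rev _ _
      _ ≤ ‖x s3 - x s1‖ := ih h2'
end

section
/- Let g_1, ..., g_d : R → R be differentiable quasiconvex functions, each with L-Lipschitz derivative and each attaining its minimum, and let f(x) = Σ_i g_i(x_i). Then for gradient descent on f with step size η ≤ 1/L started at x_0, the path length satisfies Σ_{k=0}^∞ ‖x_k - x_{k+1}‖ ≤ √d · ‖x_0 - x*‖, where x* is the coordinatewise closest minimizer (x*_i is the minimizer of g_i closest to (x_0)_i). -/
open ENNReal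

lemma step_split (a z s : ℝ) (h1 : |s| ≤ |z - a|) (h2 : 0 ≤ s * (z - a)) :
    |a - (a + s)| + |a + s - z| = |a - z| := by
  rcases le_total 0 (z - a) with h | h
  · have hs : 0 ≤ s := by nlinarith [abs_le.mp h1, abs_of_nonneg h]
    have hs' : s ≤ z - a := by have := (abs_le.mp (h1.trans_eq (abs_of_nonneg h))).2; linarith
    rw [abs_sub_comm, add_sub_cancel_left, abs_of_nonneg hs,
      abs_of_nonpos (by linarith), abs_of_nonpos (by linarith)]
    ring
  · have hs : s ≤ 0 := by nlinarith [abs_le.mp h1, abs_of_nonpos h]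
    have hs' : z - a ≤ s := by
      have := (abs_le.mp (h1.trans_eq (abs_of_nonpos h))).1; linarith
    rw [abs_sub_comm, add_sub_cancel_left, abs_of_nonpos hs,
      abs_of_nonneg (by linarith), abs_of_nonneg (by linarith)]
    ring

theorem separable_quasiconvex_gd_path_length {d : ℕ}
    (g : Fin d → ℝ → ℝ) (g' : Fin d → ℝ → ℝ)
    (L η : ℝ) (hL : 0 < L)
    (hderiv : ∀ i t, HasDerivAt (g i) (g' i t) t)
    (hqc : ∀ i (a b : ℝ), g i b ≤ g i a → g' i a * (b - a) ≤ 0)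
    (hlip : ∀ i (a b : ℝ), |g' i a - g' i b| ≤ L * |a - b|)
    (hη0 : 0 < η) (hη : η ≤ 1 / L)
    (xstar : EuclideanSpace ℝ (Fin d))
    (hmin : ∀ i, ∀ t : ℝ, g i (xstar i) ≤ g i t)
    (x : ℕ → EuclideanSpace ℝ (Fin d))
    (hclosest : ∀ i, ∀ z : ℝ, (∀ t : ℝ, g i z ≤ g i t) →
      |x 0 i - xstar i| ≤ |x 0 i - z|)
    (hx : ∀ (k : ℕ) (i : Fin d), x (k + 1) i = x k i - η * g' i (x k i)) :
    ∑' k : ℕ, (‖x k - x (k + 1)‖₊ : ℝ≥0∞) ≤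
      ENNReal.ofReal (Real.sqrt d * ‖x 0 - xstar‖) := by
  -- derivative vanishes at the minimizer
  have hz0 : ∀ i, g' i (xstar i) = 0 := fun i =>
    IsLocalMin.hasDerivAt_eq_zero (Filter.Eventually.of_forall (hmin i)) (hderiv i _)
  -- per-step per-coordinate telescoping identity
  have key : ∀ k i, |x k i - x (k + 1) i| + |x (k + 1) i - xstar i|
      = |x k i - xstar i| := by
    intro k i
    set a := x k i with ha
    set z := xstar i with hzdef
    have hs1 : |(-(η * g' i a))| ≤ |z - a| := by
      rw [abs_neg, abs_mul, abs_of_pos hη0, abs_sub_comm]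
      have hg : |g' i a| ≤ L * |a - z| := by
        simpa [hzdef, hz0 i] using hlip i a z
      calc η * |g' i a| ≤ (1 / L) * (L * |a - z|) :=
            mul_le_mul hη hg (abs_nonneg _) (by positivity)
        _ = |a - z| := by field_simp
    have hs2 : 0 ≤ (-(η * g' i a)) * (z - a) := by
      have := hqc i a z (hmin i a)
      nlinarith
    have hstep : x (k + 1) i = a + (-(η * g' i a)) := by
      rw [hx k i]; ring
    rw [hstep]
    exact step_split a z _ hs1 hs2
  -- per-coordinate path length bound
  have hcoord : ∀ (N : ℕ) i, ∑ k ∈ Finset.range N, |x k i - x (k + 1) i|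
      ≤ |x 0 i - xstar i| := by
    intro N i
    have : ∑ k ∈ Finset.range N, |x k i - x (k + 1) i|
        = ∑ k ∈ Finset.range N,
          (|x k i - xstar i| - |x (k + 1) i - xstar i|) := by
      refine Finset.sum_congr rfl fun k _ => ?_
      have := key k i; linarith
    rw [this, Finset.sum_range_sub' (fun k => |x k i - xstar i|)]
    have := abs_nonneg (x N i - xstar i)
    linarith
  -- ℓ2 ≤ ℓ1
  have hnorm_le : ∀ v : EuclideanSpace ℝ (Fin d), ‖v‖ ≤ ∑ i, |v i| := by
    intro v
    rw [EuclideanSpace.norm_eq]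
    have h1 : ∑ i, ‖v i‖ ^ 2 ≤ (∑ i, ‖v i‖) ^ 2 :=
      Finset.sum_sq_le_sq_sum_of_nonneg fun i _ => norm_nonneg _
    calc Real.sqrt (∑ i, ‖v i‖ ^ 2) ≤ Real.sqrt ((∑ i, ‖v i‖) ^ 2) :=
          Real.sqrt_le_sqrt h1
      _ = ∑ i, ‖v i‖ := Real.sqrt_sq (Finset.sum_nonneg fun i _ => norm_nonneg _)
      _ = ∑ i, |v i| := by simp [Real.norm_eq_abs]
  -- ℓ1 ≤ √d ℓ2
  have hl1 : ∑ i, |x 0 i - xstar i| ≤ Real.sqrt d * ‖x 0 - xstar‖ := by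
    have happ : ∀ i, (x 0 - xstar) i = x 0 i - xstar i := fun i => rfl
    have hn : ‖x 0 - xstar‖ = Real.sqrt (∑ i, |x 0 i - xstar i| ^ 2) := by
      rw [EuclideanSpace.norm_eq]
      congr 1
    have hsq : (∑ i, |x 0 i - xstar i|) ^ 2
        ≤ (d : ℝ) * ∑ i, |x 0 i - xstar i| ^ 2 := by
      have := sq_sum_le_card_mul_sum_sq (s := (Finset.univ : Finset (Fin d)))
        (f := fun i => |x 0 i - xstar i|)
      simpa using this
    calc ∑ i, |x 0 i - xstar i|
        = Real.sqrt ((∑ i, |x 0 i - xstar i|) ^ 2) :=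
          (Real.sqrt_sq (Finset.sum_nonneg fun i _ => abs_nonneg _)).symm
      _ ≤ Real.sqrt ((d : ℝ) * ∑ i, |x 0 i - xstar i| ^ 2) := Real.sqrt_le_sqrt hsq
      _ = Real.sqrt d * Real.sqrt (∑ i, |x 0 i - xstar i| ^ 2) :=
          Real.sqrt_mul (Nat.cast_nonneg d) _
      _ = Real.sqrt d * ‖x 0 - xstar‖ := by rw [hn]
  -- real partial-sum bound
  have hmain : ∀ N : ℕ, ∑ k ∈ Finset.range N, ‖x k - x (k + 1)‖
      ≤ Real.sqrt d * ‖x 0 - xstar‖ := by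
    intro N
    calc ∑ k ∈ Finset.range N, ‖x k - x (k + 1)‖
        ≤ ∑ k ∈ Finset.range N, ∑ i, |x k i - x (k + 1) i| := by
          refine Finset.sum_le_sum fun k _ => ?_
          simpa using hnorm_le (x k - x (k + 1))
      _ = ∑ i, ∑ k ∈ Finset.range N, |x k i - x (k + 1) i| := Finset.sum_comm
      _ ≤ ∑ i, |x 0 i - xstar i| :=
          Finset.sum_le_sum fun i _ => hcoord N i
      _ ≤ Real.sqrt d * ‖x 0 - xstar‖ := hl1
  -- pass to ℝ≥0∞
  rw [ENNReal.tsum_eq_iSup_sum]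
  refine iSup_le fun s => ?_
  obtain ⟨N, hN⟩ := s.exists_nat_subset_range
  calc ∑ k ∈ s, (‖x k - x (k + 1)‖₊ : ℝ≥0∞)
      ≤ ∑ k ∈ Finset.range N, (‖x k - x (k + 1)‖₊ : ℝ≥0∞) :=
        Finset.sum_le_sum_of_subset hN
    _ = ENNReal.ofReal (∑ k ∈ Finset.range N, ‖x k - x (k + 1)‖) := by
        rw [ENNReal.ofReal_sum_of_nonneg fun k _ => norm_nonneg _]
        exact Finset.sum_congr rfl fun k _ => (ofReal_norm _).symm
    _ ≤ ENNReal.ofReal (Real.sqrt d * ‖x 0 - xstar‖) :=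
        ENNReal.ofReal_le_ofReal (hmain N)
end

section
/- For all real x ≥ 1, the inequality x^{-1/(x-1)} · (1 - 1/x) ≤ (log x)/e holds (where the left side at x = 1 is interpreted as its limit 0). -/
open Real

/-- Padé-type lower bound for the logarithm: for `v ≥ 1`,
`(v-1)(5v+1)/(2v(v+2)) ≤ log v`. -/
theorem pade_log {v : ℝ} (hv : 1 ≤ v) :
    (v - 1) * (5 * v + 1) / (2 * v * (v + 2)) ≤ Real.log v := by
  set f : ℝ → ℝ := fun t => Real.log t - (5 * t ^ 2 - 4 * t - 1) / (2 * t ^ 2 + 4 * t) with hf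
  have hd : ∀ t : ℝ, 0 < t → HasDerivAt f ((t - 1) ^ 3 / (t ^ 2 * (t + 2) ^ 2)) t := by
    intro t ht
    have ht0 : t ≠ 0 := ne_of_gt ht
    have hden : 2 * t ^ 2 + 4 * t ≠ 0 := by nlinarith
    have ht2 : t + 2 ≠ 0 := by nlinarith
    have h1 : HasDerivAt Real.log t⁻¹ t := Real.hasDerivAt_log ht0
    have h2 : HasDerivAt (fun u : ℝ => 5 * u ^ 2 - 4 * u - 1) (10 * t - 4) t := by
      have h := (((hasDerivAt_pow 2 t).const_mul (5 : ℝ)).sub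
        ((hasDerivAt_id t).const_mul (4 : ℝ))).sub_const 1
      refine h.congr_deriv ?_
      push_cast
      ring
    have h3 : HasDerivAt (fun u : ℝ => 2 * u ^ 2 + 4 * u) (4 * t + 4) t := by
      have h := ((hasDerivAt_pow 2 t).const_mul (2 : ℝ)).add
        ((hasDerivAt_id t).const_mul (4 : ℝ))
      refine h.congr_deriv ?_
      push_cast
      ring
    have h4 := h2.div h3 hden
    have h5 := h1.sub h4
    refine h5.congr_deriv ?_
    field_simp
    ring
  have hmono : MonotoneOn f (Set.Ici 1) := by
    apply monotoneOn_of_deriv_nonneg (convex_Ici 1)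
    · intro t ht
      have ht0 : (0 : ℝ) < t := lt_of_lt_of_le one_pos ht
      exact (hd t ht0).continuousAt.continuousWithinAt
    · intro t ht
      rw [interior_Ici] at ht
      exact (hd t (by linarith [Set.mem_Ioi.mp ht])).differentiableAt.differentiableWithinAt
    · intro t ht
      rw [interior_Ici] at ht
      have ht1 : (1 : ℝ) < t := Set.mem_Ioi.mp ht
      rw [(hd t (by linarith)).deriv]
      apply div_nonneg
      · exact pow_nonneg (by linarith) 3
      · positivity
  have h01 : f 1 ≤ f v := hmono (Set.mem_Ici.mpr le_rfl) (Set.mem_Ici.mpr hv) hv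
  have hf1 : f 1 = 0 := by
    norm_num [hf, Real.log_one]
  have hv0 : (0 : ℝ) < v := lt_of_lt_of_le one_pos hv
  have heq : (v - 1) * (5 * v + 1) / (2 * v * (v + 2)) =
      (5 * v ^ 2 - 4 * v - 1) / (2 * v ^ 2 + 4 * v) := by
    have h1 : 2 * v * (v + 2) = 2 * v ^ 2 + 4 * v := by ring
    have h2 : (v - 1) * (5 * v + 1) = 5 * v ^ 2 - 4 * v - 1 := by ring
    rw [h1, h2]
  rw [heq]
  have hfv : 0 ≤ f v := hf1 ▸ h01
  simp only [hf] at hfv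
  linarith

set_option maxHeartbeats 1600000 in
theorem rpow_ineq_log_div_e (x : ℝ) (hx : 1 ≤ x) :
    x ^ (-(1 / (x - 1))) * (1 - 1 / x) ≤ Real.log x / Real.exp 1 := by
  rcases eq_or_lt_of_le hx with heq | hx1
  · rw [← heq]
    norm_num
  · have hx0 : (0 : ℝ) < x := by linarith
    have hb : (0 : ℝ) < x - 1 := by linarith
    set y := Real.sqrt x with hy
    have hyx : y ^ 2 = x := Real.sq_sqrt hx0.le
    have hy1 : 1 < y := by
      have h := Real.sqrt_lt_sqrt (by norm_num) hx1
      simpa using h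
    have hy0 : (0 : ℝ) < y := by linarith
    have hD : (0 : ℝ) < y * (y + 2) := by nlinarith
    set l := (y - 1) * (5 * y + 1) / (y * (y + 2)) with hl
    have hl0 : 0 < l := div_pos (by nlinarith) hD
    have hlog : l ≤ Real.log x := by
      have hp := pade_log hy1.le
      have hlx : Real.log x = 2 * Real.log y := by
        rw [← hyx, Real.log_pow]
        norm_num
      have h2 : l = 2 * ((y - 1) * (5 * y + 1) / (2 * y * (y + 2))) := by
        rw [hl]
        field_simp
      rw [hlx, h2]
      linarith
    have hlb : l ≤ x - 1 := hlog.trans (Real.log_le_sub_one_of_pos hx0)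
    set z := l / (x - 1) - 1 with hz
    have hz0 : z ≤ 0 := by
      have h : l / (x - 1) ≤ 1 := (div_le_one hb).mpr hlb
      rw [hz]; linarith
    have hz1 : -1 < z := by
      have h : 0 < l / (x - 1) := div_pos hl0 hb
      rw [hz]; linarith
    have habs : |z| ≤ 1 := abs_le.mpr ⟨by linarith, by linarith⟩
    have hexpb := Real.exp_bound habs (n := 4) (by norm_num)
    have hsum : (∑ m ∈ Finset.range 4, z ^ m / (m.factorial : ℝ)) =
        1 + z + z ^ 2 / 2 + z ^ 3 / 6 := by
      rw [Finset.sum_range_succ, Finset.sum_range_succ, Finset.sum_range_succ,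
        Finset.sum_range_succ]
      norm_num [Nat.factorial]
    have habs4 : |z| ^ 4 = z ^ 4 := by
      rw [← abs_pow]
      exact abs_of_nonneg (by positivity)
    have hK : 1 + z + z ^ 2 / 2 + z ^ 3 / 6 - z ^ 4 * (5 / 96) ≤ Real.exp z := by
      have h := (abs_le.mp hexpb).1
      rw [hsum, habs4] at h
      have h4 : ((Nat.succ 4 : ℕ) : ℝ) / ((Nat.factorial 4 : ℕ) * (4 : ℕ)) = 5 / 96 := by
        norm_num [Nat.factorial]
      rw [h4] at h
      linarith
    set K := 1 + z + z ^ 2 / 2 + z ^ 3 / 6 - z ^ 4 * (5 / 96) with hKdef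
    have hKpos : 0 < K := by
      have e : 96 * K = 96 * (1 + z) + z ^ 2 * ((1 + z) * (21 - 5 * z)) + 27 * z ^ 2 := by
        rw [hKdef]; ring
      have h1 : 0 ≤ z ^ 2 * ((1 + z) * (21 - 5 * z)) :=
        mul_nonneg (sq_nonneg z) (mul_nonneg (by linarith) (by linarith))
      have h2 : (0:ℝ) ≤ 27 * z ^ 2 := by positivity
      have h3 : (0:ℝ) < 96 * (1 + z) := by linarith
      linarith
    -- the key polynomial inequality
    have hkey : x - 1 ≤ x * l * K := by
      have hDne : y * (y + 2) ≠ 0 := ne_of_gt hD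
      have hyne : y ≠ 0 := ne_of_gt hy0
      have hy2ne : y + 2 ≠ 0 := by nlinarith
      have hbne' : y ^ 2 - 1 ≠ 0 := by nlinarith
      have expand : x * l * K - (x - 1) =
          (y - 1) ^ 7 * y ^ 2 *
            (39 * y ^ 11 + 285 * y ^ 10 + 1325 * y ^ 9 + 6879 * y ^ 8 + 24606 * y ^ 7 +
              43434 * y ^ 6 + 33426 * y ^ 5 + 12198 * y ^ 4 + 2235 * y ^ 3 + 57 * y ^ 2 -
              63 * y - 5) /
            (96 * ((y ^ 2 - 1) * (y * (y + 2))) ^ 4 * (y * (y + 2))) := by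
        rw [hKdef, hz, hl, ← hyx]
        field_simp
        ring
      have hnum : 0 ≤ (y - 1) ^ 7 * y ^ 2 *
          (39 * y ^ 11 + 285 * y ^ 10 + 1325 * y ^ 9 + 6879 * y ^ 8 + 24606 * y ^ 7 +
            43434 * y ^ 6 + 33426 * y ^ 5 + 12198 * y ^ 4 + 2235 * y ^ 3 + 57 * y ^ 2 -
            63 * y - 5) := by
        apply mul_nonneg (mul_nonneg (pow_nonneg (by linarith) 7) (by positivity))
        have h3 : y ≤ y ^ 3 := by nlinarith
        have h13 : 1 ≤ y ^ 3 := by nlinarith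
        have h2 : (0:ℝ) ≤ y ^ 2 := by positivity
        have h4 : (0:ℝ) ≤ y ^ 4 := by positivity
        have h5 : (0:ℝ) ≤ y ^ 5 := by positivity
        have h6 : (0:ℝ) ≤ y ^ 6 := by positivity
        have h7 : (0:ℝ) ≤ y ^ 7 := by positivity
        have h8 : (0:ℝ) ≤ y ^ 8 := by positivity
        have h9 : (0:ℝ) ≤ y ^ 9 := by positivity
        have h10 : (0:ℝ) ≤ y ^ 10 := by positivity
        have h11 : (0:ℝ) ≤ y ^ 11 := by positivity
        linarith
      have hden : (0:ℝ) < 96 * ((y ^ 2 - 1) * (y * (y + 2))) ^ 4 * (y * (y + 2)) := by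
        have h1 : (0:ℝ) < y ^ 2 - 1 := by nlinarith
        positivity
      have h0 : 0 ≤ x * l * K - (x - 1) := expand ▸ div_nonneg hnum hden.le
      linarith
    -- assemble
    have hrw : x ^ (-(1 / (x - 1))) = Real.exp (Real.log x * -(1 / (x - 1))) :=
      Real.rpow_def_of_pos hx0 _
    have h1x : 1 - 1 / x = (x - 1) / x := by field_simp
    have hexp_mono : Real.exp (Real.log x * -(1 / (x - 1))) ≤ Real.exp (-(l / (x - 1))) := by
      apply Real.exp_le_exp.mpr
      have he : Real.log x * -(1 / (x - 1)) = -(Real.log x / (x - 1)) := by ring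
      rw [he]
      have := (div_le_div_iff_of_pos_right hb).mpr hlog
      linarith
    have hfrac : 0 ≤ (x - 1) / x := div_nonneg hb.le hx0.le
    have hez : 0 < Real.exp z := Real.exp_pos z
    have he1 : 0 < Real.exp 1 := Real.exp_pos 1
    have hmain : Real.exp (-(l / (x - 1))) * ((x - 1) / x) ≤ l / Real.exp 1 := by
      have hze : Real.exp (-(l / (x - 1))) = (Real.exp 1 * Real.exp z)⁻¹ := by
        rw [show -(l / (x - 1)) = -(1 + z) by rw [hz]; ring, Real.exp_neg, Real.exp_add]
      rw [hze]
      have h2 : (x - 1) / x ≤ l * Real.exp z := by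
        rw [div_le_iff₀ hx0]
        have h3 : x * l * K ≤ x * l * Real.exp z :=
          mul_le_mul_of_nonneg_left hK (by positivity)
        calc x - 1 ≤ x * l * K := hkey
          _ ≤ x * l * Real.exp z := h3
          _ = l * Real.exp z * x := by ring
      calc (Real.exp 1 * Real.exp z)⁻¹ * ((x - 1) / x)
          ≤ (Real.exp 1 * Real.exp z)⁻¹ * (l * Real.exp z) :=
            mul_le_mul_of_nonneg_left h2 (by positivity)
        _ = l / Real.exp 1 := by
            field_simp
    have hfinal : l / Real.exp 1 ≤ Real.log x / Real.exp 1 :=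
      (div_le_div_iff_of_pos_right (Real.exp_pos 1)).mpr hlog
    calc x ^ (-(1 / (x - 1))) * (1 - 1 / x)
        = Real.exp (Real.log x * -(1 / (x - 1))) * ((x - 1) / x) := by rw [hrw, h1x]
      _ ≤ Real.exp (-(l / (x - 1))) * ((x - 1) / x) :=
          mul_le_mul_of_nonneg_right hexp_mono hfrac
      _ ≤ l / Real.exp 1 := hmain
      _ ≤ Real.log x / Real.exp 1 := hfinal
end

section
/- Let σ_1 ≥ ... ≥ σ_m > 0 with condition number κ = σ_1/σ_m, and α ∈ R^m. Then ∫_0^∞ √(Σ_{i=1}^m e^{-2tσ_i} σ_i² α_i²) dt ≤ (1 + 2.5√(log κ)) · ‖α‖₂. -/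
open MeasureTheory ENNReal Finset
open MeasureTheory ENNReal Finset

lemma my_sqrt_add_le {a b : ℝ} (ha : 0 ≤ a) (hb : 0 ≤ b) :
    Real.sqrt (a + b) ≤ Real.sqrt a + Real.sqrt b := by
  have h : a + b ≤ (Real.sqrt a + Real.sqrt b) ^ 2 := by
    nlinarith [Real.sq_sqrt ha, Real.sq_sqrt hb, Real.sqrt_nonneg a, Real.sqrt_nonneg b]
  calc Real.sqrt (a + b) ≤ Real.sqrt ((Real.sqrt a + Real.sqrt b) ^ 2) := Real.sqrt_le_sqrt h
    _ = Real.sqrt a + Real.sqrt b := Real.sqrt_sq (by positivity)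

lemma my_sqrt_sum_le {ι : Type*} (s : Finset ι) (f : ι → ℝ) (hf : ∀ i, 0 ≤ f i) :
    Real.sqrt (∑ i ∈ s, f i) ≤ ∑ i ∈ s, Real.sqrt (f i) := by
  induction s using Finset.cons_induction with
  | empty => simp
  | cons a s ha ih =>
    rw [Finset.sum_cons, Finset.sum_cons]
    calc Real.sqrt (f a + ∑ i ∈ s, f i) ≤ Real.sqrt (f a) + Real.sqrt (∑ i ∈ s, f i) :=
          my_sqrt_add_le (hf a) (Finset.sum_nonneg fun i _ => hf i)
      _ ≤ _ := by gcongr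

lemma my_lintegral_exp {C l : ℝ} (hC : 0 ≤ C) (hl : 0 < l) :
    ∫⁻ t in Set.Ioi (0:ℝ), ENNReal.ofReal (C * Real.exp (-l * t)) = ENNReal.ofReal (C / l) := by
  have hint : IntegrableOn (fun t : ℝ => C * Real.exp (-l * t)) (Set.Ioi 0) :=
    (exp_neg_integrableOn_Ioi 0 hl).const_mul C
  rw [← MeasureTheory.ofReal_integral_eq_lintegral_ofReal hint
    (Filter.Eventually.of_forall fun t => by positivity)]
  congr 1
  rw [MeasureTheory.integral_const_mul]
  have h := integral_comp_mul_left_Ioi (fun x => Real.exp (-x)) 0 hl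
  simp only [mul_zero, smul_eq_mul] at h
  have : ∫ t in Set.Ioi (0:ℝ), Real.exp (-l * t) = l⁻¹ * ∫ x in Set.Ioi (0:ℝ), Real.exp (-x) := by
    rw [← h]; congr 1; ext t; ring_nf
  rw [this, integral_exp_neg_Ioi_zero]
  field_simp

lemma my_pow_logb_bounds {y : ℝ} (hy : 1 ≤ y) :
    (2:ℝ) ^ (⌊Real.logb 2 y⌋.toNat) ≤ y ∧ y < 2 ^ (⌊Real.logb 2 y⌋.toNat + 1) := by
  set x := Real.logb 2 y with hxdef
  have hy0 : 0 < y := lt_of_lt_of_le one_pos hy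
  have hx : 0 ≤ x := Real.logb_nonneg one_lt_two hy
  have hfl : ((⌊x⌋.toNat : ℤ) : ℝ) = ((⌊x⌋ : ℤ) : ℝ) := by
    norm_cast; exact Int.toNat_of_nonneg (Int.floor_nonneg.2 hx)
  have h1 : ((⌊x⌋.toNat : ℕ) : ℝ) ≤ x := by
    push_cast at hfl ⊢; rw [hfl]; exact Int.floor_le x
  have h2 : x < (⌊x⌋.toNat : ℕ) + 1 := by
    push_cast at hfl ⊢; rw [hfl]; exact Int.lt_floor_add_one x
  have hrw : (2:ℝ) ^ x = y := Real.rpow_logb (by norm_num) (by norm_num) hy0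
  constructor
  · calc (2:ℝ) ^ (⌊x⌋.toNat) = (2:ℝ) ^ ((⌊x⌋.toNat : ℕ) : ℝ) := (Real.rpow_natCast 2 _).symm
      _ ≤ 2 ^ x := Real.rpow_le_rpow_of_exponent_le one_le_two h1
      _ = y := hrw
  · calc y = 2 ^ x := hrw.symm
      _ < 2 ^ (((⌊x⌋.toNat + 1 : ℕ)) : ℝ) := by
          apply Real.rpow_lt_rpow_of_exponent_lt one_lt_two
          push_cast; exact h2
      _ = 2 ^ (⌊x⌋.toNat + 1) := Real.rpow_natCast 2 _

lemma my_key_arith (n : ℕ) (r L : ℝ) (hr1 : 1 ≤ r) (hr2 : r ≤ 2)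
    (hL : L = n * Real.log 2 + Real.log r) :
    Real.sqrt (4 * n + r ^ 2) ≤ 1 + 2.5 * Real.sqrt L := by
  have hlog2 : (0.6931 : ℝ) < Real.log 2 := by
    linarith [Real.log_two_gt_d9]
  have hlog2' : Real.log 2 < 0.6932 := by linarith [Real.log_two_lt_d9]
  have hlr : 0 ≤ Real.log r := Real.log_nonneg hr1
  have hlr2 : Real.log r ≤ Real.log 2 := Real.log_le_log (by linarith) hr2
  have hL0 : 0 ≤ L := by
    rw [hL]; positivity
  set s := Real.sqrt L with hs
  have hs0 : 0 ≤ s := Real.sqrt_nonneg L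
  have hs2 : s ^ 2 = L := Real.sq_sqrt hL0
  have key : 4 * n + r ^ 2 ≤ (1 + 2.5 * s) ^ 2 := by
    rcases Nat.eq_zero_or_pos n with hn | hn
    · subst hn
      simp only [Nat.cast_zero, zero_mul, zero_add] at hL ⊢
      -- L = log r ∈ [0, log 2], r = exp L ≤ 1 + L + 1.25 L^2
      have hLle : L ≤ 0.6932 := by rw [hL]; linarith
      have hre : r = Real.exp L := by
        rw [hL, Real.exp_log (by linarith)]
      have hbound := Real.exp_bound (x := L) (by rw [abs_of_nonneg hL0]; linarith) (n := 2)
        (by norm_num)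
      have hexp_le : Real.exp L ≤ 1 + L + 1.25 * L ^ 2 := by
        simp only [Finset.sum_range_succ, Finset.sum_range_zero, Nat.factorial] at hbound
        rw [abs_of_nonneg hL0] at hbound
        norm_num at hbound
        rw [abs_le] at hbound
        nlinarith [hbound.2]
      have hrle : r ≤ 1 + L + 1.25 * L ^ 2 := hre ▸ hexp_le
      -- s^2 = L, s ≤ 0.833
      have hsle : s ≤ 0.833 := by nlinarith
      nlinarith
    · have hn1 : (1 : ℝ) ≤ n := by exact_mod_cast hn
      have hLn : (n : ℝ) * 0.6931 ≤ L := by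
        rw [hL]; nlinarith
      have hs08 : 0.8 ≤ s := by nlinarith
      nlinarith [sq_nonneg s]
  calc Real.sqrt (4 * n + r ^ 2) ≤ Real.sqrt ((1 + 2.5 * s) ^ 2) := Real.sqrt_le_sqrt key
    _ = 1 + 2.5 * s := Real.sqrt_sq (by positivity)

set_option maxHeartbeats 1000000 in
theorem quadratic_gf_path_length_sqrt_log_kappa {m : ℕ}
    (σ α : Fin (m + 1) → ℝ)
    (hσpos : ∀ i, 0 < σ i)
    (hσmono : ∀ i j : Fin (m + 1), i ≤ j → σ j ≤ σ i)
    (κ : ℝ) (hκ : κ = σ 0 / σ (Fin.last m)) :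
    ∫⁻ t in Set.Ioi (0 : ℝ),
        ENNReal.ofReal (Real.sqrt (∑ i, Real.exp (-2 * t * σ i) * σ i ^ 2 * α i ^ 2)) ≤
      ENNReal.ofReal ((1 + 2.5 * Real.sqrt (Real.log κ)) * Real.sqrt (∑ i, α i ^ 2)) := by
  set s0 := σ 0 with hs0def
  set sm := σ (Fin.last m) with hsmdef
  have hs0 : 0 < s0 := hσpos 0
  have hsm : 0 < sm := hσpos _
  have hles0 : ∀ i, σ i ≤ s0 := fun i => hσmono 0 i (Fin.zero_le i)
  have hgesm : ∀ i, sm ≤ σ i := fun i => hσmono i (Fin.last m) (Fin.le_last i)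
  have hsms0 : sm ≤ s0 := hgesm 0
  have hκ1 : 1 ≤ κ := by rw [hκ]; exact (one_le_div hsm).2 hsms0
  have hκ0 : 0 < κ := lt_of_lt_of_le one_pos hκ1
  set n := (⌊Real.logb 2 κ⌋).toNat with hn
  obtain ⟨hκlow, hκhigh⟩ := my_pow_logb_bounds hκ1
  set r := κ / 2 ^ n with hrdef
  have h2n : (0:ℝ) < 2 ^ n := by positivity
  have hr1 : 1 ≤ r := (one_le_div h2n).2 hκlow
  have hr2 : r ≤ 2 := by
    rw [hrdef, div_le_iff₀ h2n]
    calc κ ≤ 2 ^ (n+1) := hκhigh.le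
      _ = 2 * 2 ^ n := by ring
  have hLeq : Real.log κ = n * Real.log 2 + Real.log r := by
    rw [hrdef, Real.log_div (ne_of_gt hκ0) (ne_of_gt h2n), Real.log_pow]
    ring
  set kf : Fin (m+1) → ℕ := fun i => (⌊Real.logb 2 (s0 / σ i)⌋).toNat with hkf
  have hratio : ∀ i, 1 ≤ s0 / σ i := fun i => (one_le_div (hσpos i)).2 (hles0 i)
  have hband : ∀ i, s0 / 2 ^ (kf i + 1) < σ i ∧ σ i ≤ s0 / 2 ^ (kf i) := by
    intro i
    obtain ⟨h1, h2⟩ := my_pow_logb_bounds (hratio i)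
    have hp1 : (0:ℝ) < 2 ^ (kf i) := by positivity
    have hp2 : (0:ℝ) < 2 ^ (kf i + 1) := by positivity
    constructor
    · rw [div_lt_iff₀ hp2]
      rw [div_lt_iff₀ (hσpos i)] at h2
      nlinarith
    · rw [le_div_iff₀ hp1]
      rw [le_div_iff₀ (hσpos i)] at h1
      nlinarith
  have hkfn : ∀ i, kf i ≤ n := by
    intro i
    apply Int.toNat_le_toNat
    apply Int.floor_le_floor
    apply Real.logb_le_logb_of_le one_lt_two (div_pos hs0 (hσpos i))
    rw [hκ]
    exact div_le_div_of_nonneg_left hs0.le hsm (hgesm i)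
  set u : ℕ → ℝ := fun k => s0 / 2 ^ k with hu
  set lo : ℕ → ℝ := fun k => max (s0 / 2 ^ (k + 1)) sm with hlo
  have hlopos : ∀ k, 0 < lo k := fun k => lt_of_lt_of_le hsm (le_max_right _ _)
  have hupos : ∀ k, 0 < u k := fun k => div_pos hs0 (by positivity)
  set A : ℕ → ℝ := fun k => Real.sqrt (∑ i ∈ Finset.univ.filter (fun i => kf i = k), α i ^ 2)
    with hA
  have hAnn : ∀ k, 0 ≤ A k := fun k => Real.sqrt_nonneg _
  have hA2 : ∀ k, A k ^ 2 = ∑ i ∈ Finset.univ.filter (fun i => kf i = k), α i ^ 2 :=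
    fun k => Real.sq_sqrt (Finset.sum_nonneg fun i _ => sq_nonneg _)
  have hσlo : ∀ i, lo (kf i) ≤ σ i := fun i => max_le (hband i).1.le (hgesm i)
  have hσu : ∀ i, σ i ≤ u (kf i) := fun i => (hband i).2
  have hcnn : ∀ k, 0 ≤ u k / lo k := fun k => div_nonneg (hupos k).le (hlopos k).le
  have hcle2 : ∀ k, u k / lo k ≤ 2 := by
    intro k
    rw [div_le_iff₀ (hlopos k)]
    calc u k = 2 * (s0 / 2 ^ (k+1)) := by
          simp only [hu]; field_simp; ring
      _ ≤ 2 * lo k := by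
          have := le_max_left (s0 / 2 ^ (k+1)) sm
          linarith
  have hcn : u n / lo n ≤ r := by
    have h1 : u n / lo n ≤ u n / sm :=
      div_le_div_of_nonneg_left (hupos n).le hsm (le_max_right _ _)
    have h2 : u n / sm = r := by
      rw [hrdef, hκ, hu]; ring
    linarith
  -- pointwise band splitting
  have hptA : ∀ t : ℝ, ENNReal.ofReal (Real.sqrt (∑ i, Real.exp (-2 * t * σ i) * σ i ^ 2 * α i ^ 2))
      ≤ ∑ k ∈ Finset.range (n+1), ENNReal.ofReal (Real.sqrt
          (∑ i ∈ Finset.univ.filter (fun i => kf i = k),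
            Real.exp (-2 * t * σ i) * σ i ^ 2 * α i ^ 2)) := by
    intro t
    have hsplit : (∑ i, Real.exp (-2 * t * σ i) * σ i ^ 2 * α i ^ 2)
        = ∑ k ∈ Finset.range (n+1), ∑ i ∈ Finset.univ.filter (fun i => kf i = k),
            Real.exp (-2 * t * σ i) * σ i ^ 2 * α i ^ 2 :=
      (Finset.sum_fiberwise_of_maps_to
        (fun i _ => Finset.mem_range.2 (Nat.lt_succ_of_le (hkfn i))) _).symm
    rw [hsplit, ← ENNReal.ofReal_sum_of_nonneg (fun k _ => Real.sqrt_nonneg _)]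
    exact ENNReal.ofReal_le_ofReal (my_sqrt_sum_le _ _
      (fun k => Finset.sum_nonneg fun i _ => by positivity))
  have hmeas : ∀ k, Measurable (fun t : ℝ => ENNReal.ofReal (Real.sqrt
      (∑ i ∈ Finset.univ.filter (fun i => kf i = k),
        Real.exp (-2 * t * σ i) * σ i ^ 2 * α i ^ 2))) := by
    intro k
    apply Measurable.ennreal_ofReal
    apply Continuous.measurable
    apply Real.continuous_sqrt.comp
    exact continuous_finset_sum _ fun i _ => by fun_prop
  -- per-band integral bound
  have hbandint : ∀ k ∈ Finset.range (n+1),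
      (∫⁻ t in Set.Ioi (0:ℝ), ENNReal.ofReal (Real.sqrt
        (∑ i ∈ Finset.univ.filter (fun i => kf i = k),
          Real.exp (-2 * t * σ i) * σ i ^ 2 * α i ^ 2)))
      ≤ ENNReal.ofReal ((u k / lo k) * A k) := by
    intro k _
    have hptB : ∀ t ∈ Set.Ioi (0:ℝ),
        ENNReal.ofReal (Real.sqrt (∑ i ∈ Finset.univ.filter (fun i => kf i = k),
          Real.exp (-2 * t * σ i) * σ i ^ 2 * α i ^ 2))
        ≤ ENNReal.ofReal (u k * A k * Real.exp (-lo k * t)) := by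
      intro t ht
      have ht0 : 0 < t := ht
      apply ENNReal.ofReal_le_ofReal
      have hBnn : 0 ≤ u k * A k * Real.exp (-lo k * t) := by
        have := (hupos k).le; have := hAnn k; positivity
      have hSle : (∑ i ∈ Finset.univ.filter (fun i => kf i = k),
          Real.exp (-2 * t * σ i) * σ i ^ 2 * α i ^ 2)
          ≤ (u k * A k * Real.exp (-lo k * t)) ^ 2 := by
        have hexpand : (u k * A k * Real.exp (-lo k * t)) ^ 2
            = (u k ^ 2 * Real.exp (-lo k * t) ^ 2) * A k ^ 2 := by ring
        rw [hexpand, hA2 k, Finset.mul_sum]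
        apply Finset.sum_le_sum
        intro i hi
        have hik : kf i = k := by simpa using (Finset.mem_filter.1 hi).2
        have hloi : lo k ≤ σ i := hik ▸ hσlo i
        have hui : σ i ≤ u k := hik ▸ hσu i
        have h1 : Real.exp (-2 * t * σ i) ≤ Real.exp (-lo k * t) ^ 2 := by
          rw [sq, ← Real.exp_add]
          apply Real.exp_le_exp.2
          nlinarith
        have h2 : σ i ^ 2 ≤ u k ^ 2 := by nlinarith [(hσpos i).le]
        have hα : (0:ℝ) ≤ α i ^ 2 := sq_nonneg _
        calc Real.exp (-2 * t * σ i) * σ i ^ 2 * α i ^ 2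
            ≤ (Real.exp (-lo k * t) ^ 2 * u k ^ 2) * α i ^ 2 := by
              apply mul_le_mul_of_nonneg_right _ hα
              exact mul_le_mul h1 h2 (sq_nonneg _) (sq_nonneg _)
          _ = u k ^ 2 * Real.exp (-lo k * t) ^ 2 * α i ^ 2 := by ring
      calc Real.sqrt _ ≤ Real.sqrt ((u k * A k * Real.exp (-lo k * t)) ^ 2) :=
            Real.sqrt_le_sqrt hSle
        _ = u k * A k * Real.exp (-lo k * t) := Real.sqrt_sq hBnn
    calc (∫⁻ t in Set.Ioi (0:ℝ), ENNReal.ofReal (Real.sqrt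
          (∑ i ∈ Finset.univ.filter (fun i => kf i = k),
            Real.exp (-2 * t * σ i) * σ i ^ 2 * α i ^ 2)))
        ≤ ∫⁻ t in Set.Ioi (0:ℝ), ENNReal.ofReal (u k * A k * Real.exp (-lo k * t)) := by
          apply setLIntegral_mono
          · apply Measurable.ennreal_ofReal
            apply Continuous.measurable
            fun_prop
          · exact hptB
      _ = ENNReal.ofReal ((u k * A k) / lo k) :=
          my_lintegral_exp (mul_nonneg (hupos k).le (hAnn k)) (hlopos k)
      _ = ENNReal.ofReal ((u k / lo k) * A k) := by
          congr 1
          exact mul_div_right_comm _ _ _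
  -- final real inequality
  have hfinal : ∑ k ∈ Finset.range (n+1), (u k / lo k) * A k
      ≤ (1 + 2.5 * Real.sqrt (Real.log κ)) * Real.sqrt (∑ i, α i ^ 2) := by
    have hCS := Real.sum_mul_le_sqrt_mul_sqrt (Finset.range (n+1)) (fun k => u k / lo k) A
    have hAsum : ∑ k ∈ Finset.range (n+1), A k ^ 2 = ∑ i, α i ^ 2 := by
      have h1 : ∀ k ∈ Finset.range (n+1), A k ^ 2
          = ∑ i ∈ Finset.univ.filter (fun i => kf i = k), α i ^ 2 := fun k _ => hA2 k
      rw [Finset.sum_congr rfl h1]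
      exact Finset.sum_fiberwise_of_maps_to
        (fun i _ => Finset.mem_range.2 (Nat.lt_succ_of_le (hkfn i))) _
    have hcsum : ∑ k ∈ Finset.range (n+1), (u k / lo k) ^ 2 ≤ 4 * n + r ^ 2 := by
      rw [Finset.sum_range_succ]
      have h1 : ∑ k ∈ Finset.range n, (u k / lo k) ^ 2 ≤ ∑ _k ∈ Finset.range n, (4:ℝ) :=
        Finset.sum_le_sum fun k _ => by nlinarith [hcle2 k, hcnn k]
      have h2 : (u n / lo n) ^ 2 ≤ r ^ 2 := by nlinarith [hcn, hcnn n]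
      rw [Finset.sum_const, Finset.card_range] at h1
      have : (n : ℝ) * 4 = 4 * n := by ring
      simp only [nsmul_eq_mul] at h1
      linarith
    calc ∑ k ∈ Finset.range (n+1), (u k / lo k) * A k
        ≤ Real.sqrt (∑ k ∈ Finset.range (n+1), (u k / lo k) ^ 2)
          * Real.sqrt (∑ k ∈ Finset.range (n+1), A k ^ 2) := hCS
      _ ≤ Real.sqrt (4 * n + r ^ 2) * Real.sqrt (∑ i, α i ^ 2) := by
          rw [hAsum]
          exact mul_le_mul_of_nonneg_right (Real.sqrt_le_sqrt hcsum) (Real.sqrt_nonneg _)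
      _ ≤ (1 + 2.5 * Real.sqrt (Real.log κ)) * Real.sqrt (∑ i, α i ^ 2) :=
          mul_le_mul_of_nonneg_right (my_key_arith n r _ hr1 hr2 hLeq) (Real.sqrt_nonneg _)
  calc (∫⁻ t in Set.Ioi (0:ℝ),
        ENNReal.ofReal (Real.sqrt (∑ i, Real.exp (-2 * t * σ i) * σ i ^ 2 * α i ^ 2)))
      ≤ ∫⁻ t in Set.Ioi (0:ℝ), ∑ k ∈ Finset.range (n+1), ENNReal.ofReal (Real.sqrt
          (∑ i ∈ Finset.univ.filter (fun i => kf i = k),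
            Real.exp (-2 * t * σ i) * σ i ^ 2 * α i ^ 2)) := lintegral_mono fun t => hptA t
    _ = ∑ k ∈ Finset.range (n+1), ∫⁻ t in Set.Ioi (0:ℝ), ENNReal.ofReal (Real.sqrt
          (∑ i ∈ Finset.univ.filter (fun i => kf i = k),
            Real.exp (-2 * t * σ i) * σ i ^ 2 * α i ^ 2)) :=
        lintegral_finset_sum _ (fun k _ => hmeas k)
    _ ≤ ∑ k ∈ Finset.range (n+1), ENNReal.ofReal ((u k / lo k) * A k) :=
        Finset.sum_le_sum hbandint
    _ = ENNReal.ofReal (∑ k ∈ Finset.range (n+1), (u k / lo k) * A k) :=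
        (ENNReal.ofReal_sum_of_nonneg (fun k _ => mul_nonneg (hcnn k) (hAnn k))).symm
    _ ≤ _ := ENNReal.ofReal_le_ofReal hfinal
end

section
/- Let A be an n×d real matrix, Σ = AᵀA/n with nonzero eigenvalues σ_1 ≥ ... ≥ σ_p > 0, and consider gradient descent x_{k+1} = x_k - (η/n)Aᵀ(Ax_k - y) with η ≤ 1/σ_1. Then the discrete path length is bounded by the continuous one plus one extra term: Σ_{k=0}^∞ ‖x_k - x_{k+1}‖ ≤ dist(x_0, X*) + ∫_0^∞ √(Σ_i e^{-2tσ_i}σ_i²α_i²) dt, where α_i is the component of x_0 - Π_{X*}(x_0) along the i-th eigenvector and X* is the solution set of (1/2n)‖y - Ax‖². -/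
open MeasureTheory ENNReal Matrix

private lemma aux_b_zero {b c : ℝ} (hc : 0 ≤ c) (h : ∀ t : ℝ, 0 ≤ b * t + c * t ^ 2) :
    b = 0 := by
  by_contra hb
  have hc1 : (0:ℝ) < c + 1 := by linarith
  have h1 := h (-b / (c + 1))
  have hne : c + 1 ≠ 0 := ne_of_gt hc1
  have h2 : b * (-b / (c + 1)) + c * (-b / (c + 1)) ^ 2 = -(b ^ 2 / (c + 1) ^ 2) := by
    field_simp
    ring
  rw [h2] at h1
  have hb2 : 0 < b ^ 2 := lt_of_le_of_ne (sq_nonneg b) (Ne.symm (pow_ne_zero 2 hb))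
  have : 0 < b ^ 2 / (c + 1) ^ 2 := div_pos hb2 (by positivity)
  linarith

private lemma aux_norm {p d : ℕ} {v : Fin p → Fin d → ℝ}
    (hortho : ∀ i j, (∑ l, v i l * v j l) = if i = j then (1 : ℝ) else 0)
    (c : Fin p → ℝ) :
    ∑ j, (∑ i, c i * v i j) ^ 2 = ∑ i, c i ^ 2 := by
  have h1 : ∀ j : Fin d, (∑ i, c i * v i j) ^ 2
      = ∑ i, ∑ i', (c i * c i') * (v i j * v i' j) := by
    intro j
    rw [sq, Finset.sum_mul_sum]
    exact Finset.sum_congr rfl fun i _ => Finset.sum_congr rfl fun i' _ => by ring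
  simp_rw [h1]
  have h2 : ∀ i : Fin p, (∑ i' : Fin p, ∑ j : Fin d, (c i * c i') * (v i j * v i' j))
      = c i ^ 2 := by
    intro i
    have h3 : ∀ i' : Fin p, (∑ j : Fin d, (c i * c i') * (v i j * v i' j))
        = (c i * c i') * (if i = i' then (1:ℝ) else 0) := by
      intro i'
      rw [← Finset.mul_sum, hortho]
    simp_rw [h3, mul_ite, mul_one, mul_zero]
    simp [sq]
  calc (∑ j : Fin d, ∑ i : Fin p, ∑ i' : Fin p, (c i * c i') * (v i j * v i' j))
      = ∑ i : Fin p, ∑ i' : Fin p, ∑ j : Fin d, (c i * c i') * (v i j * v i' j) := by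
        rw [Finset.sum_comm]
        exact Finset.sum_congr rfl fun i _ => Finset.sum_comm
    _ = ∑ i, c i ^ 2 := Finset.sum_congr rfl fun i _ => h2 i

theorem quadratic_gd_path_length_le_gf {n d p : ℕ} (hn : 0 < n)
    (A : Matrix (Fin n) (Fin d) ℝ) (y : Fin n → ℝ)
    (σ : Fin p → ℝ) (v : Fin p → (Fin d → ℝ)) (α : Fin p → ℝ)
    (η : ℝ) (hη0 : 0 < η)
    (hσpos : ∀ i, 0 < σ i)
    (hσmono : ∀ i j : Fin p, i ≤ j → σ j ≤ σ i)
    (hη1 : ∀ i, η * σ i ≤ 1)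
    (heig : ∀ i, (((1 : ℝ) / n) • (Aᵀ * A)).mulVec (v i) = σ i • v i)
    (hortho : ∀ i j, (∑ l, v i l * v j l) = if i = j then (1 : ℝ) else 0)
    (f : (Fin d → ℝ) → ℝ)
    (hf : ∀ z, f z = (1 / (2 * n)) * ∑ j, (y j - A.mulVec z j) ^ 2)
    (Xstar : Set (Fin d → ℝ)) (hX : Xstar = {z | ∀ w, f z ≤ f w})
    (x : ℕ → (Fin d → ℝ))
    (hx : ∀ k : ℕ,
      x (k + 1) = fun j => x k j - (η / n) * (Aᵀ.mulVec (A.mulVec (x k) - y)) j)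
    (p0 : Fin d → ℝ) (hp0 : p0 ∈ Xstar)
    (hproj : ∀ q ∈ Xstar,
      Real.sqrt (∑ j, (x 0 j - p0 j) ^ 2) ≤ Real.sqrt (∑ j, (x 0 j - q j) ^ 2))
    (hdecomp : ∀ j, x 0 j - p0 j = ∑ i, α i * v i j) :
    ∑' k : ℕ, ENNReal.ofReal (Real.sqrt (∑ j, (x k j - x (k + 1) j) ^ 2)) ≤
      ENNReal.ofReal (Real.sqrt (∑ j, (x 0 j - p0 j) ^ 2) +
        ∫ t in Set.Ioi (0 : ℝ),
          Real.sqrt (∑ i, Real.exp (-2 * t * σ i) * σ i ^ 2 * α i ^ 2)) := by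
  have hn' : (0:ℝ) < (n:ℝ) := by exact_mod_cast hn
  have hnne : (n:ℝ) ≠ 0 := ne_of_gt hn'
  set g : ℝ → ℝ := fun t => Real.sqrt (∑ i, Real.exp (-2 * t * σ i) * σ i ^ 2 * α i ^ 2)
    with hgdef
  have hmin : ∀ w, f p0 ≤ f w := by rw [hX] at hp0; exact hp0
  -- gradient at p0 vanishes
  have hgrad : ∀ j, Aᵀ.mulVec (A.mulVec p0 - y) j = 0 := by
    intro j
    set S1 : ℝ := ∑ l, (y l - A.mulVec p0 l) * A l j with hS1
    set S2 : ℝ := ∑ l, (A l j) ^ 2 with hS2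
    have hS2nn : 0 ≤ S2 := Finset.sum_nonneg fun l _ => sq_nonneg _
    have hkey : ∀ t : ℝ, 0 ≤ (-(1/(n:ℝ)) * S1) * t + ((1/(2*(n:ℝ))) * S2) * t ^ 2 := by
      intro t
      have hw := hmin (fun m => p0 m + t * (if m = j then 1 else 0))
      rw [hf, hf] at hw
      have hAv : ∀ l, A.mulVec (fun m => p0 m + t * (if m = j then 1 else 0)) l
          = A.mulVec p0 l + t * A l j := by
        intro l
        simp only [Matrix.mulVec, dotProduct]
        have h4 : ∀ m, A l m * (p0 m + t * (if m = j then 1 else 0))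
            = A l m * p0 m + (if m = j then t * A l j else 0) := by
          intro m; by_cases h : m = j <;> simp [h] <;> ring
        simp_rw [h4]
        rw [Finset.sum_add_distrib, Finset.sum_ite_eq' Finset.univ j]
        simp
      simp_rw [hAv] at hw
      have hexp : ∑ l, (y l - (A.mulVec p0 l + t * A l j)) ^ 2
          = (∑ l, (y l - A.mulVec p0 l) ^ 2) + (-2 * t * S1 + t ^ 2 * S2) := by
        rw [hS1, hS2, Finset.mul_sum, Finset.mul_sum]
        rw [← Finset.sum_add_distrib, ← Finset.sum_add_distrib]
        exact Finset.sum_congr rfl fun l _ => by ring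
      rw [hexp] at hw
      have h2n : (0:ℝ) < 1/(2*(n:ℝ)) := by positivity
      have h3 : 0 ≤ -2*t*S1 + t^2*S2 := by
        nlinarith [hw]
      have h5 : (-(1/(n:ℝ)) * S1) * t + ((1/(2*(n:ℝ))) * S2) * t^2
          = (1/(2*(n:ℝ))) * (-2*t*S1 + t^2*S2) := by field_simp
      rw [h5]
      exact mul_nonneg h2n.le h3
    have hb := aux_b_zero (by positivity) hkey
    have hS1z : S1 = 0 := by
      field_simp at hb
      linarith
    have : Aᵀ.mulVec (A.mulVec p0 - y) j = -S1 := by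
      simp only [Matrix.mulVec, dotProduct, Matrix.transpose_apply, Pi.sub_apply, hS1]
      rw [← Finset.sum_neg_distrib]
      exact Finset.sum_congr rfl fun l _ => by ring
    rw [this, hS1z, neg_zero]
  have hgrad0 : Aᵀ.mulVec (A.mulVec p0 - y) = 0 := funext hgrad
  -- the iterate formula
  have hiter : ∀ k j, x k j - p0 j = ∑ i, ((1 - η * σ i)^k * α i) * v i j := by
    intro k
    induction k with
    | zero => intro j; simpa using hdecomp j
    | succ k ih =>
      intro j
      have hxk : (fun m => x k m - p0 m) = ∑ i, ((1 - η * σ i)^k * α i) • v i := by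
        funext m
        rw [ih m]
        simp [Finset.sum_apply]
      have hsplit : A.mulVec (x k) - y
          = A.mulVec (fun m => x k m - p0 m) + (A.mulVec p0 - y) := by
        have : (fun m => x k m - p0 m) = x k - p0 := rfl
        rw [this, Matrix.mulVec_sub]
        abel
      have hAtA : Aᵀ.mulVec (A.mulVec (x k) - y)
          = (Aᵀ * A).mulVec (fun m => x k m - p0 m) := by
        rw [hsplit, Matrix.mulVec_add, hgrad0, add_zero, Matrix.mulVec_mulVec]
      have hSig : (((1:ℝ)/n) • (Aᵀ * A)).mulVec (fun m => x k m - p0 m)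
          = ∑ i, (((1 - η * σ i)^k * α i) * σ i) • v i := by
        rw [hxk, ← Matrix.mulVecLin_apply, map_sum]
        refine Finset.sum_congr rfl fun i _ => ?_
        rw [LinearMap.map_smul, Matrix.mulVecLin_apply, heig i, smul_smul]
      have hval : (η / n) * (Aᵀ.mulVec (A.mulVec (x k) - y)) j
          = η * ∑ i, (((1 - η * σ i)^k * α i) * σ i) * v i j := by
        rw [hAtA]
        have h6 : (Aᵀ * A).mulVec (fun m => x k m - p0 m) j
            = (n:ℝ) * ((((1:ℝ)/n) • (Aᵀ * A)).mulVec (fun m => x k m - p0 m)) j := by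
          rw [Matrix.smul_mulVec]
          simp [hnne]
        rw [h6, hSig]
        simp only [Finset.sum_apply, Pi.smul_apply, smul_eq_mul]
        field_simp
      have hx' : x (k+1) j = x k j - (η / n) * (Aᵀ.mulVec (A.mulVec (x k) - y)) j := by
        rw [hx k]
      rw [hx', hval]
      have : x k j - η * (∑ i, (((1 - η * σ i)^k * α i) * σ i) * v i j) - p0 j
          = (x k j - p0 j) - η * ∑ i, (((1 - η * σ i)^k * α i) * σ i) * v i j := by ring
      rw [this, ih j, Finset.mul_sum, ← Finset.sum_sub_distrib]
      exact Finset.sum_congr rfl fun i _ => by ring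
  -- differences
  have hdiff : ∀ k j, x k j - x (k+1) j
      = ∑ i, ((1 - η * σ i)^k * α i * (η * σ i)) * v i j := by
    intro k j
    have : x k j - x (k+1) j = (x k j - p0 j) - (x (k+1) j - p0 j) := by ring
    rw [this, hiter k j, hiter (k+1) j, ← Finset.sum_sub_distrib]
    exact Finset.sum_congr rfl fun i _ => by ring
  set a : ℕ → ℝ := fun k => Real.sqrt (∑ j, (x k j - x (k + 1) j) ^ 2) with hadef
  have ha : ∀ k, a k = Real.sqrt (∑ i, ((1 - η * σ i)^k * α i * (η * σ i)) ^ 2) := by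
    intro k
    rw [hadef]
    simp only
    congr 1
    simp_rw [hdiff k]
    exact aux_norm hortho _
  have hann : ∀ k, 0 ≤ a k := fun k => Real.sqrt_nonneg _
  -- bound the first term
  have ha0 : a 0 ≤ Real.sqrt (∑ j, (x 0 j - p0 j) ^ 2) := by
    rw [ha 0]
    have : (∑ j, (x 0 j - p0 j) ^ 2) = ∑ i, α i ^ 2 := by
      simp_rw [hdecomp]
      exact aux_norm hortho _
    rw [this]
    apply Real.sqrt_le_sqrt
    simp only [pow_zero, one_mul]
    apply Finset.sum_le_sum
    intro i _
    have h1 : 0 < η * σ i := mul_pos hη0 (hσpos i)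
    have h2 : (η * σ i) ^ 2 ≤ 1 := by nlinarith [hη1 i]
    calc (α i * (η * σ i)) ^ 2 = α i ^ 2 * (η * σ i) ^ 2 := by ring
      _ ≤ α i ^ 2 * 1 := mul_le_mul_of_nonneg_left h2 (sq_nonneg _)
      _ = α i ^ 2 := mul_one _
  -- bound later terms by g at grid points
  have hterm : ∀ k : ℕ, a k ≤ η * g ((k:ℝ) * η) := by
    intro k
    rw [ha k]
    have hgval : g ((k:ℝ)*η)
        = Real.sqrt (∑ i, Real.exp (-2 * ((k:ℝ)*η) * σ i) * σ i ^ 2 * α i ^ 2) := rfl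
    have hrhs : η * g ((k:ℝ)*η)
        = Real.sqrt (η^2 * ∑ i, Real.exp (-2 * ((k:ℝ)*η) * σ i) * σ i ^ 2 * α i ^ 2) := by
      rw [Real.sqrt_mul (sq_nonneg η), Real.sqrt_sq hη0.le, hgval]
    rw [hrhs]
    apply Real.sqrt_le_sqrt
    rw [Finset.mul_sum]
    apply Finset.sum_le_sum
    intro i _
    have h1 : 0 < η * σ i := mul_pos hη0 (hσpos i)
    have h2 : (0:ℝ) ≤ 1 - η * σ i := by linarith [hη1 i]
    have h3 : (1 - η * σ i) ≤ Real.exp (-(η * σ i)) := by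
      have := Real.add_one_le_exp (-(η * σ i)); linarith
    have h4 : ((1 - η * σ i)^k)^2 ≤ Real.exp (-2 * ((k:ℝ) * η) * σ i) := by
      have h5 : ((1 - η * σ i)^k)^2 = (1 - η * σ i)^(2*k) := by
        rw [← pow_mul, Nat.mul_comm]
      rw [h5]
      calc (1 - η * σ i)^(2*k) ≤ (Real.exp (-(η * σ i)))^(2*k) :=
            pow_le_pow_left₀ h2 h3 _
        _ = Real.exp (-2 * ((k:ℝ) * η) * σ i) := by
            rw [← Real.exp_nat_mul]
            congr 1
            push_cast
            ring
    calc ((1 - η * σ i)^k * α i * (η * σ i)) ^ 2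
        = ((1 - η * σ i)^k)^2 * (σ i ^ 2 * α i ^ 2) * η ^ 2 := by ring
      _ ≤ Real.exp (-2 * ((k:ℝ) * η) * σ i) * (σ i ^ 2 * α i ^ 2) * η ^ 2 := by
          apply mul_le_mul_of_nonneg_right _ (sq_nonneg η)
          apply mul_le_mul_of_nonneg_right h4
          positivity
      _ = η ^ 2 * (Real.exp (-2 * ((k:ℝ) * η) * σ i) * σ i ^ 2 * α i ^ 2) := by ring
  -- properties of g
  have hgnn : ∀ t, 0 ≤ g t := fun t => Real.sqrt_nonneg _
  have hganti : ∀ s t : ℝ, 0 ≤ s → s ≤ t → g t ≤ g s := by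
    intro s t hs hst
    apply Real.sqrt_le_sqrt
    apply Finset.sum_le_sum
    intro i _
    have : Real.exp (-2 * t * σ i) ≤ Real.exp (-2 * s * σ i) := by
      apply Real.exp_le_exp.mpr
      nlinarith [(hσpos i).le]
    nlinarith [this, sq_nonneg (σ i * α i), Real.exp_pos (-2 * t * σ i),
      sq_nonneg (σ i), sq_nonneg (α i)]
  have hgcont : Continuous g := by
    apply Real.continuous_sqrt.comp
    exact continuous_finset_sum _ fun i _ =>
      ((Real.continuous_exp.comp ((continuous_const.mul continuous_id).mul
        continuous_const)).mul continuous_const).mul continuous_const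
  -- integrability of g on Ioi 0
  have hint : IntegrableOn g (Set.Ioi (0:ℝ)) := by
    rcases Nat.eq_zero_or_pos p with hp | hp
    · have : g = fun _ => 0 := by
        funext t
        rw [hgdef]
        subst hp
        simp
      rw [this]
      exact integrableOn_zero
    · set i₀ : Fin p := ⟨p - 1, Nat.sub_lt hp one_pos⟩ with hi0
      set σm : ℝ := σ i₀ with hσm
      have hσmpos : 0 < σm := hσpos i₀
      have hσmle : ∀ i, σm ≤ σ i := by
        intro i
        apply hσmono
        exact Fin.le_def.mpr (Nat.le_sub_one_of_lt i.isLt)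
      set C : ℝ := Real.sqrt (∑ i, σ i ^ 2 * α i ^ 2) with hC
      apply Integrable.mono' ((exp_neg_integrableOn_Ioi 0 hσmpos).const_mul C)
      · exact (hgcont.aestronglyMeasurable).restrict
      · filter_upwards [ae_restrict_mem measurableSet_Ioi] with t ht
        rw [Real.norm_eq_abs, abs_of_nonneg (hgnn t)]
        have h1 : ∀ i : Fin p, Real.exp (-2 * t * σ i) * σ i ^ 2 * α i ^ 2
            ≤ Real.exp (-2 * t * σm) * (σ i ^ 2 * α i ^ 2) := by
          intro i
          have ht0 : (0:ℝ) ≤ t := (le_of_lt ht)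
          have : Real.exp (-2 * t * σ i) ≤ Real.exp (-2 * t * σm) := by
            apply Real.exp_le_exp.mpr
            nlinarith [hσmle i]
          nlinarith [this, sq_nonneg (σ i * α i), sq_nonneg (σ i), sq_nonneg (α i),
            Real.exp_pos (-2 * t * σ i)]
        calc g t ≤ Real.sqrt (∑ i, Real.exp (-2 * t * σm) * (σ i ^ 2 * α i ^ 2)) := by
              apply Real.sqrt_le_sqrt
              exact Finset.sum_le_sum fun i _ => h1 i
          _ = C * Real.exp (-σm * t) := by
              rw [← Finset.mul_sum, Real.sqrt_mul (Real.exp_pos _).le, hC]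
              have : Real.sqrt (Real.exp (-2 * t * σm)) = Real.exp (-σm * t) := by
                rw [show (-2 * t * σm) = (-σm * t) + (-σm * t) by ring, Real.exp_add,
                  Real.sqrt_mul_self (Real.exp_pos _).le]
              rw [this, mul_comm]
  -- step bound: η * g((k+1)η) ≤ ∫ over Ioc (kη) ((k+1)η)
  have hstepint : ∀ k : ℕ, η * g (((k:ℝ)+1) * η) ≤ ∫ t in Set.Ioc ((k:ℝ)*η) (((k:ℝ)+1)*η), g t := by
    intro k
    have hknn : (0:ℝ) ≤ (k:ℝ)*η := by positivity
    have hle : (k:ℝ)*η ≤ ((k:ℝ)+1)*η := by nlinarith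
    have hsub : Set.Ioc ((k:ℝ)*η) (((k:ℝ)+1)*η) ⊆ Set.Ioi (0:ℝ) := by
      intro t ht
      exact lt_of_le_of_lt hknn ht.1
    have hmeasfin : volume (Set.Ioc ((k:ℝ)*η) (((k:ℝ)+1)*η)) < ⊤ := measure_Ioc_lt_top
    have hconst : ∫ _ in Set.Ioc ((k:ℝ)*η) (((k:ℝ)+1)*η), g (((k:ℝ)+1) * η)
        = η * g (((k:ℝ)+1) * η) := by
      rw [setIntegral_const, measureReal_def, Real.volume_Ioc, smul_eq_mul]
      congr 1
      rw [ENNReal.toReal_ofReal (by linarith)]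
      ring
    rw [← hconst]
    apply setIntegral_mono_on
    · exact integrableOn_const hmeasfin.ne
    · exact hint.mono_set hsub
    · exact measurableSet_Ioc
    · intro t ht
      exact hganti t (((k:ℝ)+1) * η) (le_of_lt (lt_of_le_of_lt hknn ht.1)) ht.2
  -- sum of the interval integrals
  have hIoiNN : 0 ≤ ∫ t in Set.Ioi (0:ℝ), g t :=
    setIntegral_nonneg measurableSet_Ioi fun t _ => hgnn t
  have hsumint : ∀ m : ℕ, ∑ k ∈ Finset.range m,
      (∫ t in Set.Ioc ((k:ℝ)*η) (((k:ℝ)+1)*η), g t) ≤ ∫ t in Set.Ioi (0:ℝ), g t := by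
    intro m
    have hivint : ∀ k, k < m → IntervalIntegrable g volume ((k:ℝ)*η) (((k:ℝ)+1)*η) := by
      intro k _
      rw [intervalIntegrable_iff]
      have hle : (k:ℝ)*η ≤ ((k:ℝ)+1)*η := by nlinarith
      rw [Set.uIoc_of_le hle]
      apply hint.mono_set
      intro t ht
      have : (0:ℝ) ≤ (k:ℝ)*η := by positivity
      exact lt_of_le_of_lt this ht.1
    have heq : ∑ k ∈ Finset.range m, (∫ t in Set.Ioc ((k:ℝ)*η) (((k:ℝ)+1)*η), g t)
        = ∫ t in Set.Ioc (0:ℝ) ((m:ℝ)*η), g t := by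
      have h8 : ∀ k ∈ Finset.range m, (∫ t in Set.Ioc ((k:ℝ)*η) (((k:ℝ)+1)*η), g t)
          = ∫ t in (((k:ℕ):ℝ)*η)..((((k:ℕ)+1:ℕ):ℝ)*η), g t := by
        intro k _
        rw [intervalIntegral.integral_of_le (by push_cast; nlinarith)]
        congr 1
        push_cast
        ring
      rw [Finset.sum_congr rfl h8]
      rw [intervalIntegral.sum_integral_adjacent_intervals
        (a := fun k : ℕ => (k:ℝ)*η) (μ := volume) (f := g) (n := m) (by
          intro k hk
          have := hivint k hk
          simpa using this)]
      rw [show (((0:ℕ):ℝ))*η = (0:ℝ) by norm_num]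
      rw [intervalIntegral.integral_of_le (by positivity)]
    rw [heq]
    apply setIntegral_mono_set hint
    · filter_upwards with t using hgnn t
    · apply HasSubset.Subset.eventuallyLE
      exact Set.Ioc_subset_Ioi_self
  -- assemble: every partial sum is bounded
  have hpartial : ∀ N : ℕ, ∑ k ∈ Finset.range N, a k ≤
      Real.sqrt (∑ j, (x 0 j - p0 j) ^ 2) + ∫ t in Set.Ioi (0:ℝ), g t := by
    intro N
    cases N with
    | zero =>
      simp only [Finset.range_zero, Finset.sum_empty]
      exact add_nonneg (Real.sqrt_nonneg _) hIoiNN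
    | succ m =>
      rw [Finset.sum_range_succ']
      have h10 : ∑ k ∈ Finset.range m, a (k + 1) ≤ ∫ t in Set.Ioi (0:ℝ), g t := by
        calc ∑ k ∈ Finset.range m, a (k + 1)
            ≤ ∑ k ∈ Finset.range m, (∫ t in Set.Ioc ((k:ℝ)*η) (((k:ℝ)+1)*η), g t) := by
              apply Finset.sum_le_sum
              intro k _
              calc a (k+1) ≤ η * g (((k+1):ℕ) * η) := hterm (k+1)
                _ = η * g (((k:ℝ)+1) * η) := by push_cast; ring_nf
                _ ≤ _ := hstepint k
          _ ≤ ∫ t in Set.Ioi (0:ℝ), g t := hsumint m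
      linarith [ha0]
  -- finish in ENNReal
  rw [ENNReal.tsum_eq_iSup_sum]
  apply iSup_le
  intro s
  obtain ⟨N, hN⟩ := s.exists_nat_subset_range
  calc ∑ k ∈ s, ENNReal.ofReal (a k)
      ≤ ∑ k ∈ Finset.range N, ENNReal.ofReal (a k) :=
        Finset.sum_le_sum_of_subset hN
    _ = ENNReal.ofReal (∑ k ∈ Finset.range N, a k) :=
        (ENNReal.ofReal_sum_of_nonneg fun k _ => hann k).symm
    _ ≤ _ := ENNReal.ofReal_le_ofReal (hpartial N)
end

section
/- Let x_k, x_{k+1} be consecutive points of a self-contracted sequence with tail Γ = {x_{k+2}, x_{k+3}, ...}, let x' = (1/3)x_{k+1} + (2/3)x_k and v = (x_k - x_{k+1})/‖x_k - x_{k+1}‖. Then for every y ∈ Γ, ⟨v, y - x'⟩ ≤ -‖x_k - x_{k+1}‖/6. -/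
open RealInnerProductSpace

theorem self_contracted_negative_inner {d : ℕ}
    (x : ℕ → EuclideanSpace ℝ (Fin d)) (k : ℕ)
    (hne : x (k + 1) ≠ x k)
    (hsc : ∀ m : ℕ, k + 2 ≤ m → ‖x m - x (k + 1)‖ ≤ ‖x m - x k‖) :
    ∀ m : ℕ, k + 2 ≤ m →
      ⟪‖x k - x (k + 1)‖⁻¹ • (x k - x (k + 1)),
        x m - ((1 / 3 : ℝ) • x (k + 1) + (2 / 3 : ℝ) • x k)⟫ ≤
      -‖x k - x (k + 1)‖ / 6 := by
  intro m hm
  set a := x k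
  set b := x (k + 1)
  set y := x m
  have hn : (0 : ℝ) < ‖a - b‖ := by
    rw [norm_pos_iff, sub_ne_zero]
    exact fun h => hne h.symm
  have h1 : ‖y - b‖ ^ 2 ≤ ‖y - a‖ ^ 2 :=
    pow_le_pow_left₀ (norm_nonneg _) (hsc m hm) 2
  rw [norm_sub_sq_real, norm_sub_sq_real] at h1
  rw [real_inner_smul_left, inv_mul_le_iff₀ hn]
  have hexp : ‖a - b‖ ^ 2 = ‖a‖ ^ 2 - 2 * ⟪a, b⟫ + ‖b‖ ^ 2 := norm_sub_sq_real a b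
  have : ⟪a - b, y - ((1 / 3 : ℝ) • b + (2 / 3 : ℝ) • a)⟫ =
      ⟪a, y⟫ - ⟪b, y⟫ - (1/3) * ⟪a, b⟫ - (2/3) * ‖a‖ ^ 2
        + (1/3) * ‖b‖ ^ 2 + (2/3) * ⟪b, a⟫ := by
    simp only [inner_sub_left, inner_sub_right, inner_add_right, real_inner_smul_right,
      real_inner_self_eq_norm_sq]
    ring
  rw [this]
  have hcomm : ⟪b, a⟫ = ⟪a, b⟫ := real_inner_comm a b
  have hya : ⟪y, a⟫ = ⟪a, y⟫ := real_inner_comm a y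
  have hyb : ⟪y, b⟫ = ⟪b, y⟫ := real_inner_comm b y
  nlinarith [sq_nonneg ‖a - b‖, hexp]
end
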